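/- arXiv:1403.3308 — 9 statements merged into one kernel-verified Lean document; each statement's English description precedes it below -/
import Mathlib

section
/- In the Matsuo algebra A = A^α_3(G,D) of a 3-transposition group (G,D), for any d ∈ D, the element d^ρ multiplied by the sum Σ_{c∈D} c^ρ equals (1 + (α/2)·|N_D(d)|)·d^ρ, where N_D(d) = {c ∈ D : [c,d] ≠ 1}. -/
open Finset

open scoped Classical in
/-- in the Matsuo algebra `A^α_3(G,D)` of a 3-transposition group `(G,D)`,
for `d ∈ D` we have `d^ρ · Σ_{c ∈ D} c^ρ = (1 + (α/2)|N_D(d)|) d^ρ`. -/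
theorem matsuo_mul_sum {G A : Type*} [Group G]
    [NonUnitalNonAssocCommRing A] [Module ℚ A] [SMulCommClass ℚ A A] [IsScalarTower ℚ A A]
    (D : Finset G) (α : ℚ) (hα0 : α ≠ 0) (hα1 : α ≠ 1) (ρ : G → A)
    (hinv : ∀ d ∈ D, d * d = 1) (hne1 : ∀ d ∈ D, d ≠ 1)
    (hgen : Subgroup.closure (D : Set G) = ⊤)
    (hnorm : ∀ c ∈ D, ∀ g : G, g⁻¹ * c * g ∈ D)
    (h3trans : ∀ c ∈ D, ∀ d ∈ D, orderOf (c * d) ≤ 3)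
    (hmul_self : ∀ d ∈ D, ρ d * ρ d = ρ d)
    (hmul_comm : ∀ c ∈ D, ∀ d ∈ D, c ≠ d → Commute c d → ρ c * ρ d = 0)
    (hmul_ncomm : ∀ c ∈ D, ∀ d ∈ D, ¬ Commute c d →
      ρ c * ρ d = (α/2) • (ρ c + ρ d - ρ (d⁻¹ * c * d)))
    (d : G) (hd : d ∈ D) :
    ρ d * (∑ c ∈ D, ρ c)
      = (1 + (α/2) * ((D.filter fun c => ¬ Commute c d).card : ℚ)) • ρ d := by
  have hdd : d * d = 1 := hinv d hd
  have hdinv : d⁻¹ = d := by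
    rw [← mul_one d⁻¹, ← hdd, ← mul_assoc, inv_mul_cancel, one_mul]
  have hcancel : ∀ x : G, d * (d * x) = x := fun x => by
    rw [← mul_assoc, hdd, one_mul]
  -- conjugation by d preserves the non-commuting set and is an involution on it
  have hconj_comm : ∀ c : G, Commute (d⁻¹ * c * d) d ↔ Commute c d := by
    intro c
    simp only [Commute, SemiconjBy, hdinv]
    constructor
    · intro h
      have h2 := congrArg (fun x => d * (x * d)) h
      simp only [mul_assoc, hcancel, hdd, mul_one, one_mul] at h2
      first | exact h2 | exact h2.symm
    · intro h
      simp only [mul_assoc, hdd, mul_one, hcancel]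
      first | exact h | exact h.symm
  set N := D.filter fun c => ¬ Commute c d with hN
  have hmemN : ∀ c ∈ N, d⁻¹ * c * d ∈ N := by
    intro c hc
    rw [hN, mem_filter] at hc ⊢
    exact ⟨hnorm c hc.1 d, fun h => hc.2 ((hconj_comm c).mp h)⟩
  have hinvol : ∀ c : G, d⁻¹ * (d⁻¹ * c * d) * d = c := by
    intro c
    rw [hdinv]
    simp [mul_assoc, hcancel, hdd]
  -- Σ over N of conjugates equals Σ over N
  have hsum_conj : ∑ c ∈ N, ρ (d⁻¹ * c * d) = ∑ c ∈ N, ρ c := by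
    apply Finset.sum_nbij' (i := fun c => d⁻¹ * c * d) (j := fun c => d⁻¹ * c * d)
    · intro a ha; exact hmemN a ha
    · intro a ha; exact hmemN a ha
    · intro a _; exact hinvol a
    · intro a _; exact hinvol a
    · intro a _; rfl
  rw [Finset.mul_sum]
  rw [← Finset.sum_filter_add_sum_filter_not D (fun c => Commute c d)]
  have h1 : ∑ c ∈ D.filter (fun c => Commute c d), ρ d * ρ c = ρ d := by
    rw [Finset.sum_eq_single d]
    · exact hmul_self d hd
    · intro b hb hbd
      rw [mem_filter] at hb
      rw [mul_comm]
      exact hmul_comm b hb.1 d hd hbd hb.2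
    · intro h
      exact absurd (mem_filter.mpr ⟨hd, Commute.refl d⟩ : d ∈ D.filter (fun c => Commute c d)) h
  have h2 : ∑ c ∈ N, ρ d * ρ c = ((α/2) * (N.card : ℚ)) • ρ d := by
    have : ∀ c ∈ N, ρ d * ρ c = (α/2) • (ρ c + ρ d - ρ (d⁻¹ * c * d)) := by
      intro c hc
      rw [hN, mem_filter] at hc
      rw [mul_comm]
      exact hmul_ncomm c hc.1 d hd hc.2
    rw [Finset.sum_congr rfl this, ← Finset.smul_sum]
    have : ∑ c ∈ N, (ρ c + ρ d - ρ (d⁻¹ * c * d))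
        = (N.card : ℚ) • ρ d := by
      rw [Finset.sum_sub_distrib, Finset.sum_add_distrib, hsum_conj,
        Finset.sum_const, Nat.cast_smul_eq_nsmul]
      abel
    rw [this, smul_smul]
  rw [h1, h2, add_smul, one_smul]
end

section
/- If (G,D) is a k-regular 3-transposition group (i.e., |N_D(d)| = k for all d ∈ D), then the Matsuo algebra A^α_3(G,D) has identity element id_A = (1 + αk/2)^{-1} · Σ_{d∈D} d^ρ, provided 1 + αk/2 ≠ 0. -/
open Finset

open scoped Classical in
/-- if the 3-transposition group `(G,D)` is `k`-regular and `1 + αk/2 ≠ 0`,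
then `(1 + αk/2)⁻¹ Σ_{d ∈ D} d^ρ` is an identity element of the Matsuo algebra
`A^α_3(G,D)` (the algebra spanned by the `d^ρ`). -/
theorem matsuo_identity {G A : Type*} [Group G]
    [NonUnitalNonAssocCommRing A] [Module ℚ A] [SMulCommClass ℚ A A] [IsScalarTower ℚ A A]
    (D : Finset G) (α : ℚ) (hα0 : α ≠ 0) (hα1 : α ≠ 1) (ρ : G → A)
    (hinv : ∀ d ∈ D, d * d = 1) (hne1 : ∀ d ∈ D, d ≠ 1)
    (hgen : Subgroup.closure (D : Set G) = ⊤)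
    (hnorm : ∀ c ∈ D, ∀ g : G, g⁻¹ * c * g ∈ D)
    (h3trans : ∀ c ∈ D, ∀ d ∈ D, orderOf (c * d) ≤ 3)
    (hmul_self : ∀ d ∈ D, ρ d * ρ d = ρ d)
    (hmul_comm : ∀ c ∈ D, ∀ d ∈ D, c ≠ d → Commute c d → ρ c * ρ d = 0)
    (hmul_ncomm : ∀ c ∈ D, ∀ d ∈ D, ¬ Commute c d →
      ρ c * ρ d = (α/2) • (ρ c + ρ d - ρ (d⁻¹ * c * d)))
    (hspan : Submodule.span ℚ (ρ '' (D : Set G)) = ⊤)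
    (k : ℕ) (hreg : ∀ d ∈ D, (D.filter fun c => ¬ Commute c d).card = k)
    (hden : 1 + α * k / 2 ≠ 0) :
    ∀ a : A, ((1 + α * k / 2)⁻¹ • ∑ d ∈ D, ρ d) * a = a := by
  intro a
  have hmem : a ∈ Submodule.span ℚ (ρ '' (D : Set G)) := by rw [hspan]; trivial
  induction hmem using Submodule.span_induction with
  | mem x hxm =>
    obtain ⟨d, hdD, rfl⟩ := hxm
    have hdD' : d ∈ D := hdD
    have hdd : d * d = 1 := hinv d hdD'
    have hdi : d⁻¹ = d := inv_eq_of_mul_eq_one_left hdd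
    set T := D.filter fun c => ¬ Commute c d with hT
    have hTmem : ∀ c, c ∈ T ↔ c ∈ D ∧ ¬ Commute c d := by
      intro c; simp [hT, Finset.mem_filter]
    have key : ∀ c : G, Commute (d⁻¹ * c * d) d ↔ Commute c d := by
      intro c
      constructor <;> intro h
      · have h2 := congrArg (fun x => d * x * d⁻¹) h
        simp only [Commute, SemiconjBy] at h2 ⊢
        calc c * d = d * (d⁻¹ * c * d * d) * d⁻¹ := by group
          _ = d * (d * (d⁻¹ * c * d)) * d⁻¹ := h2
          _ = d * c := by group
      · have h2 := congrArg (fun x => d⁻¹ * x * d) h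
        simp only [Commute, SemiconjBy] at h2 ⊢
        calc d⁻¹ * c * d * d = d⁻¹ * (c * d) * d := by group
          _ = d⁻¹ * (d * c) * d := by rw [h2]
          _ = d * (d⁻¹ * c * d) := by rw [hdi]; group
    have hconj : ∀ c ∈ T, d⁻¹ * c * d ∈ T := by
      intro c hc
      rw [hTmem] at hc ⊢
      exact ⟨hnorm c hc.1 d, fun h => hc.2 ((key c).mp h)⟩
    have hinvol : ∀ c : G, d⁻¹ * (d⁻¹ * c * d) * d = c := by
      intro c
      rw [hdi]
      calc d * (d * c * d) * d = (d * d) * c * (d * d) := by group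
        _ = c := by rw [hdd, one_mul, mul_one]
    have hσ : ∑ c ∈ T, ρ (d⁻¹ * c * d) = ∑ c ∈ T, ρ c :=
      Finset.sum_nbij' (fun c => d⁻¹ * c * d) (fun c => d⁻¹ * c * d)
        hconj hconj (fun c _ => hinvol c) (fun c _ => hinvol c) (fun c _ => rfl)
    have hTsub : T ⊆ D.erase d := by
      intro c hc
      rw [hTmem] at hc
      exact Finset.mem_erase.mpr ⟨fun h => hc.2 (h ▸ Commute.refl d), hc.1⟩
    have hsum1 : ∑ c ∈ D.erase d, ρ c * ρ d = ∑ c ∈ T, ρ c * ρ d := by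
      symm
      refine Finset.sum_subset hTsub ?_
      intro c hc hcT
      rcases Finset.mem_erase.mp hc with ⟨hcd, hcD⟩
      rw [hTmem] at hcT
      push_neg at hcT
      exact hmul_comm c hcD d hdD' hcd (hcT hcD)
    have hsum2 : ∑ c ∈ T, ρ c * ρ d = (α * k / 2) • ρ d := by
      have : ∀ c ∈ T, ρ c * ρ d = (α/2) • (ρ c + ρ d - ρ (d⁻¹ * c * d)) := by
        intro c hc
        rw [hTmem] at hc
        exact hmul_ncomm c hc.1 d hdD' hc.2
      rw [Finset.sum_congr rfl this, ← Finset.smul_sum]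
      have hcard : T.card = k := hreg d hdD'
      rw [Finset.sum_sub_distrib, Finset.sum_add_distrib, hσ, Finset.sum_const, hcard,
        add_sub_cancel_left, ← Nat.cast_smul_eq_nsmul ℚ, smul_smul]
      congr 1
      ring
    have hS : (∑ c ∈ D, ρ c) * ρ d = (1 + α * k / 2) • ρ d := by
      rw [Finset.sum_mul, ← Finset.sum_erase_add D _ hdD', hsum1, hsum2,
        hmul_self d hdD', add_smul, one_smul]
      exact add_comm _ _
    rw [smul_mul_assoc, hS, smul_smul, inv_mul_cancel₀ hden, one_smul]
  | zero => simp
  | add x y _ _ hx hy => rw [mul_add, hx, hy]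
  | smul r x _ hx => rw [mul_smul_comm, hx]
end

section
/- With E the transpositions of Sym(m) embedded in Sym(n), S = {1,...,m} the support, and z > m a fixed point: for any transposition (a b) ∈ E, one has (a b)^ρ · Σ_{c∈S} (c z)^ρ = α·(a b)^ρ in the Matsuo algebra A^α_3(Sym(n)). Consequently id_E · (Σ_{c∈S} (c z)^ρ - α·id_E) = 0, i.e., Σ_{c∈S}(c z)^ρ - α·id_E is a 0-eigenvector of id_E. -/
open Finset Equiv

section Aux

variable {β : Type*} [DecidableEq β]

lemma commute_swap_disjoint {a b c d : β}
    (hac : a ≠ c) (had : a ≠ d) (hbc : b ≠ c) (hbd : b ≠ d) :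
    Commute (Equiv.swap a b) (Equiv.swap c d) := by
  apply Equiv.Perm.Disjoint.commute
  intro x
  by_cases h1 : x = a
  · subst h1; exact Or.inr (Equiv.swap_apply_of_ne_of_ne hac had)
  by_cases h2 : x = b
  · subst h2; exact Or.inr (Equiv.swap_apply_of_ne_of_ne hbc hbd)
  · exact Or.inl (Equiv.swap_apply_of_ne_of_ne h1 h2)

lemma not_commute_swap {a b c : β} (hab : a ≠ b) (hac : a ≠ c) (hbc : b ≠ c) :
    ¬ Commute (Equiv.swap a b) (Equiv.swap a c) := by
  intro h
  have h2 : (Equiv.swap a b * Equiv.swap a c) c = (Equiv.swap a c * Equiv.swap a b) c := by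
    rw [h.eq]
  rw [Equiv.Perm.mul_apply, Equiv.Perm.mul_apply, Equiv.swap_apply_right,
    Equiv.swap_apply_left, Equiv.swap_apply_of_ne_of_ne (Ne.symm hac) (Ne.symm hbc),
    Equiv.swap_apply_right] at h2
  exact hab h2.symm

lemma conj_swap (u v w t : β) :
    (Equiv.swap w t)⁻¹ * Equiv.swap u v * Equiv.swap w t
      = Equiv.swap (Equiv.swap w t u) (Equiv.swap w t v) := by
  rw [Equiv.swap_apply_apply, Equiv.swap_inv]

lemma swap_ne_swap_of {a b c d : β} (hca : c ≠ a) (hcb : c ≠ b) (hcd : c ≠ d) :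
    Equiv.swap a b ≠ Equiv.swap c d := by
  intro h
  have h2 : Equiv.swap a b c = Equiv.swap c d c := by rw [h]
  rw [Equiv.swap_apply_of_ne_of_ne hca hcb, Equiv.swap_apply_left] at h2
  exact hcd h2

end Aux

open scoped Classical in
/-- in `A^α_3(Sym(n))`, with `E` the transpositions of the embedded `Sym(m)`
(supported on `S = {0,…,m-1}`) and `z` a point with `m ≤ z`, for any transposition
`(a b) ∈ E` one has `(a b)^ρ · Σ_{c ∈ S} (c z)^ρ = α (a b)^ρ`; consequently
`Σ_{c ∈ S} (c z)^ρ - α id_E` is a 0-eigenvector of `id_E`. -/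
theorem sum_cz_eigenvector
    {A : Type*} [NonUnitalNonAssocCommRing A]
    [Module ℚ A] [SMulCommClass ℚ A A] [IsScalarTower ℚ A A]
    (n m : ℕ) (hmn : m ≤ n)
    (α : ℚ) (hα0 : α ≠ 0) (hα1 : α ≠ 1) (ρ : Equiv.Perm (Fin n) → A)
    (hmul_self : ∀ d : Perm (Fin n), d.IsSwap → ρ d * ρ d = ρ d)
    (hmul_comm : ∀ c d : Perm (Fin n), c.IsSwap → d.IsSwap → c ≠ d → Commute c d →
      ρ c * ρ d = 0)
    (hmul_ncomm : ∀ c d : Perm (Fin n), c.IsSwap → d.IsSwap → ¬ Commute c d →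
      ρ c * ρ d = (α/2) • (ρ c + ρ d - ρ (d⁻¹ * c * d)))
    (hden : 1 + α * ((m : ℚ) - 2) ≠ 0)
    (E : Finset (Perm (Fin n)))
    (hE : E = univ.filter fun g : Perm (Fin n) =>
      g.IsSwap ∧ ∀ x : Fin n, m ≤ (x : ℕ) → g x = x)
    (S : Finset (Fin n)) (hS : S = univ.filter fun c : Fin n => (c : ℕ) < m)
    (z : Fin n) (hz : m ≤ (z : ℕ))
    (a b : Fin n) (ha : (a : ℕ) < m) (hb : (b : ℕ) < m) (hab : a ≠ b) :
    ρ (Equiv.swap a b) * (∑ c ∈ S, ρ (Equiv.swap c z)) = α • ρ (Equiv.swap a b) ∧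
    ((1 + α * ((m : ℚ) - 2))⁻¹ • ∑ e ∈ E, ρ e) *
        ((∑ c ∈ S, ρ (Equiv.swap c z))
          - α • ((1 + α * ((m : ℚ) - 2))⁻¹ • ∑ e ∈ E, ρ e)) = 0 := by
  -- small points are distinct from large points
  have hne' : ∀ x y : Fin n, (x : ℕ) < m → m ≤ (y : ℕ) → x ≠ y := by
    intro x y hx hy h; subst h; omega
  -- membership in E
  have hmemE : ∀ x y : Fin n, (x : ℕ) < m → (y : ℕ) < m → x ≠ y → Equiv.swap x y ∈ E := by
    intro x y hx hy hxy
    rw [hE, Finset.mem_filter]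
    refine ⟨Finset.mem_univ _, ⟨x, y, hxy, rfl⟩, ?_⟩
    intro w hw
    exact Equiv.swap_apply_of_ne_of_ne (Ne.symm (hne' x w hx hw)) (Ne.symm (hne' y w hy hw))
  -- elements of E are swaps of small points
  have hEform : ∀ e ∈ E, ∃ x y : Fin n, (x : ℕ) < m ∧ (y : ℕ) < m ∧ x ≠ y ∧
      e = Equiv.swap x y := by
    intro e he
    rw [hE, Finset.mem_filter] at he
    obtain ⟨-, ⟨x, y, hxy, rfl⟩, hfix⟩ := he
    refine ⟨x, y, ?_, ?_, hxy, rfl⟩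
    · by_contra hx
      have := hfix x (le_of_not_gt hx)
      rw [Equiv.swap_apply_left] at this
      exact hxy this.symm
    · by_contra hy
      have := hfix y (le_of_not_gt hy)
      rw [Equiv.swap_apply_right] at this
      exact hxy this
  -- key computation 1
  have key1 : ∀ x y : Fin n, (x : ℕ) < m → (y : ℕ) < m → x ≠ y →
      ρ (Equiv.swap x y) * (∑ c ∈ S, ρ (Equiv.swap c z)) = α • ρ (Equiv.swap x y) := by
    intro x y hx hy hxy
    have hxz : x ≠ z := hne' x z hx hz
    have hyz : y ≠ z := hne' y z hy hz
    have hsub : ({x, y} : Finset (Fin n)) ⊆ S := by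
      intro c hc
      rw [hS, Finset.mem_filter]
      refine ⟨Finset.mem_univ _, ?_⟩
      rcases Finset.mem_insert.mp hc with rfl | hc
      · exact hx
      · rw [Finset.mem_singleton.mp hc]; exact hy
    rw [Finset.mul_sum, ← Finset.sum_subset hsub (fun c hcS hc => ?_)]
    · rw [Finset.sum_pair hxy]
      rw [hmul_ncomm _ _ ⟨x, y, hxy, rfl⟩ ⟨x, z, hxz, rfl⟩ (not_commute_swap hxy hxz hyz)]
      have hncb : ¬ Commute (Equiv.swap x y) (Equiv.swap y z) := by
        rw [Equiv.swap_comm x y]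
        exact not_commute_swap (Ne.symm hxy) hyz hxz
      rw [hmul_ncomm _ _ ⟨x, y, hxy, rfl⟩ ⟨y, z, hyz, rfl⟩ hncb]
      have e1 : (Equiv.swap x z)⁻¹ * Equiv.swap x y * Equiv.swap x z = Equiv.swap y z := by
        rw [conj_swap, Equiv.swap_apply_left,
          Equiv.swap_apply_of_ne_of_ne (Ne.symm hxy) hyz, Equiv.swap_comm]
      have e2 : (Equiv.swap y z)⁻¹ * Equiv.swap x y * Equiv.swap y z = Equiv.swap x z := by
        rw [conj_swap, Equiv.swap_apply_of_ne_of_ne hxy hxz, Equiv.swap_apply_left]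
      rw [e1, e2]
      module
    · -- terms with c outside {x, y} vanish
      have hcm : (c : ℕ) < m := by
        rw [hS, Finset.mem_filter] at hcS; exact hcS.2
      have hcz : c ≠ z := hne' c z hcm hz
      have hcx : c ≠ x := fun h => hc (by rw [h]; exact Finset.mem_insert_self _ _)
      have hcy : c ≠ y := fun h => hc (by rw [h]; exact Finset.mem_insert_of_mem (Finset.mem_singleton_self _))
      refine hmul_comm _ _ ⟨x, y, hxy, rfl⟩ ⟨c, z, hcz, rfl⟩ ?_ ?_
      · exact (swap_ne_swap_of hcx hcy hcz).symm ∘ Eq.symm ∘ id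
      · exact commute_swap_disjoint (Ne.symm hcx) hxz (Ne.symm hcy) hyz
  -- card of S
  have hcardS : S.card = m := by
    have hSm : S = Finset.map (Fin.castLEEmb hmn) Finset.univ := by
      ext c
      rw [hS, Finset.mem_filter, Finset.mem_map]
      constructor
      · rintro ⟨-, hc⟩
        exact ⟨⟨(c : ℕ), hc⟩, Finset.mem_univ _, rfl⟩
      · rintro ⟨x, -, rfl⟩
        exact ⟨Finset.mem_univ _, x.isLt⟩
    rw [hSm, Finset.card_map, Finset.card_univ, Fintype.card_fin]
  have hswap_inj : ∀ u c c' : Fin n, Equiv.swap u c = Equiv.swap u c' → c = c' := by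
    intro u c c' h
    have h2 : Equiv.swap u c u = Equiv.swap u c' u := by rw [h]
    rwa [Equiv.swap_apply_left, Equiv.swap_apply_left] at h2
  -- key computation 2
  have key2 : ∀ e ∈ E, ρ e * (∑ f ∈ E, ρ f) = (1 + α * ((m : ℚ) - 2)) • ρ e := by
    intro e he
    obtain ⟨x, y, hx, hy, hxy, rfl⟩ := hEform e he
    have hxy' : (x : ℕ) ≠ (y : ℕ) := fun h => hxy (Fin.val_injective h)
    have hm2 : 2 ≤ m := by omega
    set T : Finset (Fin n) := S \ {x, y} with hT
    have hTmem : ∀ c ∈ T, (c : ℕ) < m ∧ c ≠ x ∧ c ≠ y := by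
      intro c hc
      rw [hT, Finset.mem_sdiff, hS, Finset.mem_filter] at hc
      refine ⟨hc.1.2, ?_, ?_⟩
      · intro h; exact hc.2 (by rw [h]; exact Finset.mem_insert_self _ _)
      · intro h
        exact hc.2 (by rw [h]; exact Finset.mem_insert_of_mem (Finset.mem_singleton_self _))
    set Afin := T.image (fun c => Equiv.swap x c) with hA
    set Bfin := T.image (fun c => Equiv.swap y c) with hB
    set P := insert (Equiv.swap x y) (Afin ∪ Bfin) with hP
    have hPsub : P ⊆ E := by
      intro f hf
      rw [hP] at hf
      rcases Finset.mem_insert.mp hf with rfl | hf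
      · exact hmemE x y hx hy hxy
      rcases Finset.mem_union.mp hf with hf | hf
      · obtain ⟨c, hc, rfl⟩ := Finset.mem_image.mp hf
        obtain ⟨hcm, hcx, hcy⟩ := hTmem c hc
        exact hmemE x c hx hcm (Ne.symm hcx)
      · obtain ⟨c, hc, rfl⟩ := Finset.mem_image.mp hf
        obtain ⟨hcm, hcx, hcy⟩ := hTmem c hc
        exact hmemE y c hy hcm (Ne.symm hcy)
    have hmemP : ∀ c : Fin n, (c : ℕ) < m → c ≠ x → Equiv.swap x c ∈ P := by
      intro c hcm hcx
      by_cases hcy : c = y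
      · subst hcy; exact Finset.mem_insert_self _ _
      · refine Finset.mem_insert_of_mem
          (Finset.mem_union_left _ (Finset.mem_image.mpr ⟨c, ?_, rfl⟩))
        rw [hT, Finset.mem_sdiff, hS, Finset.mem_filter]
        exact ⟨⟨Finset.mem_univ _, hcm⟩, by simp [hcx, hcy]⟩
    have hmemP' : ∀ c : Fin n, (c : ℕ) < m → c ≠ y → Equiv.swap y c ∈ P := by
      intro c hcm hcy
      by_cases hcx : c = x
      · subst hcx; rw [Equiv.swap_comm]; exact Finset.mem_insert_self _ _
      · refine Finset.mem_insert_of_mem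
          (Finset.mem_union_right _ (Finset.mem_image.mpr ⟨c, ?_, rfl⟩))
        rw [hT, Finset.mem_sdiff, hS, Finset.mem_filter]
        exact ⟨⟨Finset.mem_univ _, hcm⟩, by simp [hcx, hcy]⟩
    rw [Finset.mul_sum, ← Finset.sum_subset hPsub (fun f hfE hfP => ?_)]
    · -- the main sum over P
      have hnotin : Equiv.swap x y ∉ Afin ∪ Bfin := by
        intro h
        rcases Finset.mem_union.mp h with h | h
        · obtain ⟨c, hc, hceq⟩ := Finset.mem_image.mp h
          exact (hTmem c hc).2.2 (hswap_inj x c y hceq)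
        · obtain ⟨c, hc, hceq⟩ := Finset.mem_image.mp h
          rw [Equiv.swap_comm x y] at hceq
          exact (hTmem c hc).2.1 (hswap_inj y c x hceq)
      have hdisj : Disjoint Afin Bfin := by
        rw [Finset.disjoint_left]
        intro f hfA hfB
        obtain ⟨c, hc, rfl⟩ := Finset.mem_image.mp hfA
        obtain ⟨c', hc', hceq⟩ := Finset.mem_image.mp hfB
        have h2 : Equiv.swap y c' x = Equiv.swap x c x := by rw [hceq]
        rw [Equiv.swap_apply_left,
          Equiv.swap_apply_of_ne_of_ne hxy (Ne.symm (hTmem c' hc').2.1)] at h2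
        exact (hTmem c hc).2.1 h2.symm
      rw [hP, Finset.sum_insert hnotin, Finset.sum_union hdisj,
        Finset.sum_image (fun c hc c' hc' h => hswap_inj x c c' h),
        Finset.sum_image (fun c hc c' hc' h => hswap_inj y c c' h)]
      rw [hmul_self _ ⟨x, y, hxy, rfl⟩]
      have hstep : ∀ c ∈ T,
          ρ (Equiv.swap x y) * ρ (Equiv.swap x c)
            = (α/2) • (ρ (Equiv.swap x y) + ρ (Equiv.swap x c) - ρ (Equiv.swap y c)) := by
        intro c hc
        obtain ⟨hcm, hcx, hcy⟩ := hTmem c hc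
        rw [hmul_ncomm _ _ ⟨x, y, hxy, rfl⟩ ⟨x, c, Ne.symm hcx, rfl⟩
          (not_commute_swap hxy (Ne.symm hcx) (Ne.symm hcy))]
        have e1 : (Equiv.swap x c)⁻¹ * Equiv.swap x y * Equiv.swap x c = Equiv.swap y c := by
          rw [conj_swap, Equiv.swap_apply_left,
            Equiv.swap_apply_of_ne_of_ne (Ne.symm hxy) (Ne.symm hcy), Equiv.swap_comm]
        rw [e1]
      have hstep' : ∀ c ∈ T,
          ρ (Equiv.swap x y) * ρ (Equiv.swap y c)
            = (α/2) • (ρ (Equiv.swap x y) + ρ (Equiv.swap y c) - ρ (Equiv.swap x c)) := by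
        intro c hc
        obtain ⟨hcm, hcx, hcy⟩ := hTmem c hc
        have hcomm : ¬ Commute (Equiv.swap x y) (Equiv.swap y c) := by
          rw [Equiv.swap_comm x y]
          exact not_commute_swap (Ne.symm hxy) (Ne.symm hcy) (Ne.symm hcx)
        rw [hmul_ncomm _ _ ⟨x, y, hxy, rfl⟩ ⟨y, c, Ne.symm hcy, rfl⟩ hcomm]
        have e1 : (Equiv.swap y c)⁻¹ * Equiv.swap x y * Equiv.swap y c = Equiv.swap x c := by
          rw [conj_swap, Equiv.swap_apply_left,
            Equiv.swap_apply_of_ne_of_ne hxy (Ne.symm hcx)]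
        rw [e1]
      have hsum : ∑ c ∈ T, (ρ (Equiv.swap x y) * ρ (Equiv.swap x c)
            + ρ (Equiv.swap x y) * ρ (Equiv.swap y c))
          = ∑ _c ∈ T, α • ρ (Equiv.swap x y) := by
        refine Finset.sum_congr rfl fun c hc => ?_
        rw [hstep c hc, hstep' c hc]
        module
      have hsubxy : ({x, y} : Finset (Fin n)) ⊆ S := by
        intro c hc
        rw [hS, Finset.mem_filter]
        refine ⟨Finset.mem_univ _, ?_⟩
        rcases Finset.mem_insert.mp hc with rfl | hc
        · exact hx
        · rw [Finset.mem_singleton.mp hc]; exact hy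
      have hcardT : T.card = m - 2 := by
        rw [hT, Finset.card_sdiff_of_subset hsubxy, hcardS, Finset.card_pair hxy]
      rw [← Finset.sum_add_distrib, hsum, Finset.sum_const, hcardT,
        ← Nat.cast_smul_eq_nsmul ℚ, Nat.cast_sub hm2]
      push_cast
      module
    · -- vanishing terms
      obtain ⟨u, v, hu, hv, huv, rfl⟩ := hEform f hfE
      by_cases hux : u = x
      · subst hux; exact absurd (hmemP v hv (Ne.symm huv)) hfP
      by_cases huy : u = y
      · subst huy; exact absurd (hmemP' v hv (Ne.symm huv)) hfP
      by_cases hvx : v = x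
      · subst hvx; rw [Equiv.swap_comm] at hfP; exact absurd (hmemP u hu huv) hfP
      by_cases hvy : v = y
      · subst hvy; rw [Equiv.swap_comm] at hfP; exact absurd (hmemP' u hu huv) hfP
      exact hmul_comm _ _ ⟨x, y, hxy, rfl⟩ ⟨u, v, huv, rfl⟩
        (swap_ne_swap_of hux huy huv)
        (commute_swap_disjoint (Ne.symm hux) (Ne.symm hvx) (Ne.symm huy) (Ne.symm hvy))
  -- conclusion
  refine ⟨key1 a b ha hb hab, ?_⟩
  rw [smul_mul_assoc, Finset.sum_mul]
  have hzero : ∀ e ∈ E, ρ e * ((∑ c ∈ S, ρ (Equiv.swap c z))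
      - α • ((1 + α * ((m : ℚ) - 2))⁻¹ • ∑ f ∈ E, ρ f)) = 0 := by
    intro e he
    obtain ⟨x, y, hx, hy, hxy, rfl⟩ := hEform e he
    rw [mul_sub, key1 x y hx hy hxy, mul_smul_comm, mul_smul_comm, key2 _ he,
      smul_smul, smul_smul, mul_assoc, inv_mul_cancel₀ hden, mul_one, sub_self]
  rw [Finset.sum_congr rfl hzero, Finset.sum_const_zero, smul_zero]
end

section
/- The eigenvalues of ad(id_E) on A^α_3(Sym(n)), where id_E is the identity of the subalgebra spanned by the transpositions of an embedded Sym(m) (3 ≤ m < n), are exactly {1, 0, η(m)} with η(m) = αm/(2+2α(m-2)), the eigenspaces having dimensions m(m-1)/2, (n-m)(n-m+1)/2, and (m-1)(n-m) respectively, and these dimensions sum to n(n-1)/2 = dim A. -/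
open Finset Equiv

section SwapLemmas
variable {β : Type*} [DecidableEq β]

lemma swap_eq_swap_aux {i j k l : β} (hij : i ≠ j) (hkl : k ≠ l)
    (h : Equiv.swap i j = Equiv.swap k l) : (i = k ∧ j = l) ∨ (i = l ∧ j = k) := by
  have hk : Equiv.swap i j k = l := by rw [h, Equiv.swap_apply_left]
  by_cases hki : k = i
  · subst hki
    rw [Equiv.swap_apply_left] at hk
    exact Or.inl ⟨rfl, hk⟩
  by_cases hkj : k = j
  · subst hkj
    rw [Equiv.swap_apply_right] at hk
    exact Or.inr ⟨hk, rfl⟩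
  · rw [Equiv.swap_apply_of_ne_of_ne hki hkj] at hk
    exact absurd hk hkl

lemma commute_swap_of_disjoint {a b c d : β} (h1 : a ≠ c) (h2 : a ≠ d) (h3 : b ≠ c)
    (h4 : b ≠ d) : Commute (Equiv.swap a b) (Equiv.swap c d) := by
  apply Equiv.Perm.Disjoint.commute
  intro x
  by_cases hxa : x = a
  · subst hxa; right; exact Equiv.swap_apply_of_ne_of_ne h1 h2
  by_cases hxb : x = b
  · subst hxb; right; exact Equiv.swap_apply_of_ne_of_ne h3 h4
  · left; exact Equiv.swap_apply_of_ne_of_ne hxa hxb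

lemma commute_conj_swap_iff {G : Type*} [Group G] (d e : G) (hd2 : d * d = 1) :
    Commute (d * e * d) d ↔ Commute e d := by
  have h1 : d * e * d * d = d * e := by rw [mul_assoc (d * e) d d, hd2, mul_one]
  have h2 : d * (d * e * d) = e * d := by
    rw [← mul_assoc, ← mul_assoc, hd2, one_mul]
  unfold Commute SemiconjBy
  rw [h1, h2]
  exact ⟨fun h => h.symm, fun h => h.symm⟩

lemma conj_conj_swap {G : Type*} [Group G] (d e : G) (hd2 : d * d = 1) :
    d * (d * e * d) * d = e := by
  rw [← mul_assoc, ← mul_assoc, hd2, one_mul, mul_assoc, hd2, mul_one]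

end SwapLemmas

lemma nat_half_succ (k : ℕ) : k*(k-1)/2 + k = k*(k+1)/2 := by
  rcases k with _|k'
  · simp
  · obtain ⟨q, hq⟩ := Nat.even_mul_succ_self k'
    have e1 : (k'+1)*((k'+1)-1) = k'*(k'+1) := by simp [Nat.mul_comm]
    have e2 : (k'+1)*((k'+1)+1) = k'*(k'+1) + 2*(k'+1) := by ring
    omega

lemma nat_dim_sum (m n : ℕ) (hm : 1 ≤ m) (hmn : m ≤ n) :
    m*(m-1)/2 + (n-m)*(n-m+1)/2 + (m-1)*(n-m) = n*(n-1)/2 := by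
  obtain ⟨m', rfl⟩ : ∃ m', m = m'+1 := ⟨m-1, by omega⟩
  obtain ⟨k, rfl⟩ : ∃ k, n = (m'+1)+k := ⟨n-(m'+1), by omega⟩
  have h1 : m'+1-1 = m' := by omega
  have h2 : m'+1+k-(m'+1) = k := by omega
  have h3 : m'+1+k-1 = m'+k := by omega
  rw [h1, h2, h3]
  obtain ⟨p, hp⟩ := Nat.even_mul_succ_self m'
  obtain ⟨q, hq⟩ := Nat.even_mul_succ_self k
  have e1 : (m'+1)*m' = m'*(m'+1) := by ring
  have e2 : (m'+1+k)*(m'+k) = m'*(m'+1) + k*(k+1) + 2*(m'*k) := by ring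
  omega
section Counting

lemma card_lt_offDiag {β : Type*} [LinearOrder β] [DecidableEq β] (s : Finset β) :
    ((s.offDiag.filter fun p => p.1 < p.2).card) = s.card * (s.card - 1) / 2 := by
  classical
  have hcardeq : (s.offDiag.filter fun p => p.1 < p.2).card
      = (s.offDiag.filter fun p => p.2 < p.1).card := by
    refine Finset.card_nbij' Prod.swap Prod.swap ?_ ?_ ?_ ?_ <;>
      simp +contextual [Set.MapsTo, Set.LeftInvOn, Set.RightInvOn, Finset.mem_filter, Finset.mem_offDiag, ne_comm, eq_comm]
  have hsplit := Finset.card_filter_add_card_filter_not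
    (s := s.offDiag) (p := fun p => p.1 < p.2)
  have heqf : (s.offDiag.filter fun p => ¬ p.1 < p.2) = (s.offDiag.filter fun p => p.2 < p.1) := by
    apply Finset.filter_congr
    intro p hp
    rw [Finset.mem_offDiag] at hp
    simp only [not_lt, eq_iff_iff]
    constructor
    · exact fun h => lt_of_le_of_ne h (fun he => hp.2.2 he.symm)
    · exact le_of_lt
  rw [heqf, ← hcardeq, Finset.offDiag_card] at hsplit
  rcases hc : s.card with _ | k
  · rw [hc] at hsplit; omega
  · rw [hc] at hsplit
    have e1 : (k+1)*(k+1) = (k+1)*k + (k+1) := by ring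
    have e2 : (k+1) * (k+1-1) = (k+1)*k := by simp
    omega

end Counting

section EigSpan

variable {K M ι : Type*} [Field K] [AddCommGroup M] [Module K M] [Fintype ι]

lemma eigenspace_eq_span_of_basis [DecidableEq ι] (C : Module.Basis ι K M) (f : Module.End K M)
    (μ : ι → K) (h : ∀ i, f (C i) = μ i • C i) (ν : K) :
    Module.End.eigenspace f ν = Submodule.span K (C '' {i | μ i = ν}) := by
  apply le_antisymm
  · intro v hv
    rw [Module.End.mem_eigenspace_iff] at hv
    have hv' : f v = ∑ i, (C.repr v i * μ i) • C i := by
      conv_lhs => rw [← C.sum_repr v]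
      rw [map_sum]
      refine Finset.sum_congr rfl fun i _ => ?_
      rw [map_smul, h i, smul_smul]
    have hz : ∑ i, (C.repr v i * μ i - ν * C.repr v i) • C i = 0 := by
      have hh : (ν : K) • v = ∑ i, (ν * C.repr v i) • C i := by
        conv_lhs => rw [← C.sum_repr v]
        rw [Finset.smul_sum]
        exact Finset.sum_congr rfl fun i _ => by rw [smul_smul]
      simp only [sub_smul, Finset.sum_sub_distrib]
      rw [← hv', hv, hh, sub_self]
    have hcoef : ∀ i, C.repr v i * μ i - ν * C.repr v i = 0 :=
      Fintype.linearIndependent_iff.mp C.linearIndependent _ hz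
    have hrepr : ∀ i, μ i ≠ ν → C.repr v i = 0 := by
      intro i hi
      have h2 : C.repr v i * (μ i - ν) = 0 := by linear_combination hcoef i
      rcases mul_eq_zero.mp h2 with h3 | h3
      · exact h3
      · exact absurd (sub_eq_zero.mp h3) hi
    rw [show v = ∑ i, C.repr v i • C i from (C.sum_repr v).symm]
    refine Submodule.sum_mem _ fun i _ => ?_
    by_cases hi : μ i = ν
    · exact Submodule.smul_mem _ _ (Submodule.subset_span ⟨i, hi, rfl⟩)
    · rw [hrepr i hi, zero_smul]; exact Submodule.zero_mem _
  · rw [Submodule.span_le]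
    rintro _ ⟨i, hi, rfl⟩
    rw [SetLike.mem_coe, Module.End.mem_eigenspace_iff, h i, hi]

end EigSpan

open scoped Classical in
/-- the eigenvalues of `ad(id_E)` on the Matsuo algebra `A^α_3(Sym(n))`,
for `E` the transpositions of an embedded `Sym(m)` with `3 ≤ m < n`, are exactly
`{1, 0, η(m)}` with `η(m) = αm/(2+2α(m-2))`, with eigenspaces of dimensions
`m(m-1)/2`, `(n-m)(n-m+1)/2` and `(m-1)(n-m)`, summing to `n(n-1)/2 = dim A`. -/
theorem idE_eigenvalues_and_dimensions
    {A : Type*} [NonUnitalNonAssocCommRing A]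
    [Module ℚ A] [SMulCommClass ℚ A A] [IsScalarTower ℚ A A]
    (n m : ℕ) (hm3 : 3 ≤ m) (hmn : m < n)
    (α : ℚ) (hα0 : α ≠ 0) (hα1 : α ≠ 1) (ρ : Equiv.Perm (Fin n) → A)
    (hmul_self : ∀ d : Perm (Fin n), d.IsSwap → ρ d * ρ d = ρ d)
    (hmul_comm : ∀ c d : Perm (Fin n), c.IsSwap → d.IsSwap → c ≠ d → Commute c d →
      ρ c * ρ d = 0)
    (hmul_ncomm : ∀ c d : Perm (Fin n), c.IsSwap → d.IsSwap → ¬ Commute c d →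
      ρ c * ρ d = (α/2) • (ρ c + ρ d - ρ (d⁻¹ * c * d)))
    (hspan : Submodule.span ℚ (ρ '' {g : Perm (Fin n) | g.IsSwap}) = ⊤)
    (hindep : LinearIndependent ℚ (fun d : {g : Perm (Fin n) // g.IsSwap} => ρ d.1))
    (hden : 1 + α * ((m : ℚ) - 2) ≠ 0)
    (η : ℚ) (hη : η = α * m / (2 + 2 * α * ((m : ℚ) - 2)))
    (hη0 : η ≠ 0) (hη1 : η ≠ 1)
    (E : Finset (Perm (Fin n)))
    (hE : E = univ.filter fun g : Perm (Fin n) =>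
      g.IsSwap ∧ ∀ x : Fin n, m ≤ (x : ℕ) → g x = x)
    (idE : A) (hidE : idE = (1 + α * ((m : ℚ) - 2))⁻¹ • ∑ e ∈ E, ρ e) :
    (∀ μ : ℚ,
        Module.End.eigenspace (LinearMap.mulLeft ℚ idE) μ ≠ ⊥ ↔ μ ∈ ({1, 0, η} : Set ℚ)) ∧
    Module.finrank ℚ (Module.End.eigenspace (LinearMap.mulLeft ℚ idE) 1)
        = m * (m - 1) / 2 ∧
    Module.finrank ℚ (Module.End.eigenspace (LinearMap.mulLeft ℚ idE) 0)
        = (n - m) * (n - m + 1) / 2 ∧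
    Module.finrank ℚ (Module.End.eigenspace (LinearMap.mulLeft ℚ idE) η)
        = (m - 1) * (n - m) ∧
    m * (m - 1) / 2 + (n - m) * (n - m + 1) / 2 + (m - 1) * (n - m) = n * (n - 1) / 2 ∧
    Module.finrank ℚ A = n * (n - 1) / 2 := by
  -- basic objects
  set Fm : Finset (Fin n) := univ.filter (fun c : Fin n => (c : ℕ) < m) with hFmdef
  set Gm : Finset (Fin n) := univ.filter (fun c : Fin n => m ≤ (c : ℕ)) with hGmdef
  have memFm : ∀ c : Fin n, c ∈ Fm ↔ (c : ℕ) < m := by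
    intro c; rw [hFmdef, Finset.mem_filter]; simp
  have memGm : ∀ c : Fin n, c ∈ Gm ↔ m ≤ (c : ℕ) := by
    intro c; rw [hGmdef, Finset.mem_filter]; simp
  have hswap : ∀ i j : Fin n, i ≠ j → Equiv.Perm.IsSwap (swap i j) :=
    fun i j h => ⟨i, j, h, rfl⟩
  have memE_of : ∀ i j : Fin n, i ≠ j → (i : ℕ) < m → (j : ℕ) < m → swap i j ∈ E := by
    intro i j hij hi hj
    rw [hE, Finset.mem_filter]
    refine ⟨Finset.mem_univ _, hswap i j hij, fun x hx => ?_⟩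
    apply Equiv.swap_apply_of_ne_of_ne
    · intro h; rw [h] at hx; omega
    · intro h; rw [h] at hx; omega
  have exists_of_memE : ∀ g ∈ E, ∃ i j : Fin n,
      i ≠ j ∧ (i : ℕ) < m ∧ (j : ℕ) < m ∧ g = swap i j := by
    intro g hg
    rw [hE, Finset.mem_filter] at hg
    obtain ⟨-, ⟨i, j, hij, rfl⟩, hfix⟩ := hg
    refine ⟨i, j, hij, ?_, ?_, rfl⟩
    · by_contra h
      push_neg at h
      have := hfix i h
      rw [Equiv.swap_apply_left] at this
      exact hij this.symm
    · by_contra h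
      push_neg at h
      have := hfix j h
      rw [Equiv.swap_apply_right] at this
      exact hij this
  have hEswap : ∀ g ∈ E, Equiv.Perm.IsSwap g := by
    intro g hg
    obtain ⟨i, j, hij, -, -, rfl⟩ := exists_of_memE g hg
    exact hswap i j hij
  have hFm_card : Fm.card = m := by
    have himg : Fm = Finset.image (Fin.castLE hmn.le) Finset.univ := by
      ext c
      rw [memFm, Finset.mem_image]
      constructor
      · intro hc; exact ⟨⟨(c : ℕ), hc⟩, Finset.mem_univ _, by ext; simp⟩
      · rintro ⟨k, -, rfl⟩; exact k.2
    rw [himg, Finset.card_image_of_injective _ (Fin.castLE_injective hmn.le),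
      Finset.card_univ, Fintype.card_fin]
  have hGm_card : Gm.card = n - m := by
    have : Gm = Finset.univ \ Fm := by
      ext c
      rw [memGm, Finset.mem_sdiff, memFm]
      simp [not_lt]
    rw [this, Finset.card_sdiff_of_subset (Finset.subset_univ _), hFm_card, Finset.card_univ,
      Fintype.card_fin]
  -- conjugation helper
  have hconj : ∀ a b x y : Fin n,
      swap a b * Equiv.swap x y * swap a b = Equiv.swap (swap a b x) (swap a b y) := by
    intro a b x y
    have h := Equiv.swap_apply_apply (swap a b) x y
    rw [Equiv.swap_inv] at h
    exact h.symm
  have hdinv : ∀ a b : Fin n, (swap a b)⁻¹ = swap a b := fun a b => Equiv.swap_inv a b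
  have hd2 : ∀ a b : Fin n, swap a b * swap a b = 1 := fun a b => Equiv.swap_mul_self a b
  -- Lemma A
  have lemA : ∀ a b : Fin n, a ≠ b → (a : ℕ) < m → (b : ℕ) < m →
      ∑ e ∈ E, ρ e * ρ (swap a b) = (1 + α * ((m : ℚ) - 2)) • ρ (swap a b) := by
    intro a b hab ha hb
    have hdE : swap a b ∈ E := memE_of a b hab ha hb
    have hdsw : (swap a b : Perm (Fin n)).IsSwap := hswap a b hab
    rw [← Finset.sum_filter_add_sum_filter_not E (fun e => Commute e (swap a b))]
    have part1 : ∑ e ∈ E.filter (fun e => Commute e (swap a b)), ρ e * ρ (swap a b)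
        = ρ (swap a b) := by
      have hdmem : swap a b ∈ E.filter (fun e => Commute e (swap a b)) := by
        rw [Finset.mem_filter]; exact ⟨hdE, Commute.refl _⟩
      rw [Finset.sum_eq_single_of_mem (swap a b) hdmem]
      · exact hmul_self _ hdsw
      · intro e he hne
        rw [Finset.mem_filter] at he
        exact hmul_comm e _ (hEswap e he.1) hdsw hne he.2
    have hdlt : ∀ x : Fin n, (x : ℕ) < m → ((swap a b x : Fin n) : ℕ) < m := by
      intro x hx
      by_cases hxa : x = a
      · subst hxa; rw [Equiv.swap_apply_left]; exact hb
      by_cases hxb : x = b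
      · subst hxb; rw [Equiv.swap_apply_right]; exact ha
      · rw [Equiv.swap_apply_of_ne_of_ne hxa hxb]; exact hx
    have hNcongr : ∑ e ∈ E.filter (fun e => ¬ Commute e (swap a b)), ρ e * ρ (swap a b)
        = ∑ e ∈ E.filter (fun e => ¬ Commute e (swap a b)),
            (α/2) • (ρ e + ρ (swap a b) - ρ ((swap a b)⁻¹ * e * swap a b)) := by
      refine Finset.sum_congr rfl fun e he => ?_
      rw [Finset.mem_filter] at he
      exact hmul_ncomm e _ (hEswap e he.1) hdsw he.2
    have hmapN : ∀ e ∈ E.filter (fun e => ¬ Commute e (swap a b)),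
        swap a b * e * swap a b ∈ E.filter (fun e => ¬ Commute e (swap a b)) := by
      intro e he
      rw [Finset.mem_filter] at he ⊢
      obtain ⟨heE, hcomm⟩ := he
      obtain ⟨x, y, hxy, hx, hy, rfl⟩ := exists_of_memE _ heE
      constructor
      · rw [hconj a b x y]
        exact memE_of _ _ ((Equiv.injective _).ne hxy) (hdlt x hx) (hdlt y hy)
      · rw [commute_conj_swap_iff _ _ (hd2 a b)]
        exact hcomm
    have hNconj : ∑ e ∈ E.filter (fun e => ¬ Commute e (swap a b)),
          ρ ((swap a b)⁻¹ * e * swap a b)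
        = ∑ e ∈ E.filter (fun e => ¬ Commute e (swap a b)), ρ e := by
      refine Finset.sum_nbij' (fun e => swap a b * e * swap a b)
        (fun e => swap a b * e * swap a b) hmapN hmapN ?_ ?_ ?_
      · intro e _; exact conj_conj_swap _ e (hd2 a b)
      · intro e _; exact conj_conj_swap _ e (hd2 a b)
      · intro e _; rw [hdinv a b]
    have hNeq : E.filter (fun e => ¬ Commute e (swap a b))
        = ((Fm.erase a).erase b).image (fun c => Equiv.swap a c)
          ∪ ((Fm.erase a).erase b).image (fun c => Equiv.swap b c) := by
      have memxy : ∀ c : Fin n, (c : ℕ) < m → c ≠ a → c ≠ b → c ∈ (Fm.erase a).erase b := by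
        intro c h1 h2 h3
        exact Finset.mem_erase.mpr ⟨h3, Finset.mem_erase.mpr ⟨h2, (memFm c).mpr h1⟩⟩
      ext e
      constructor
      · intro he
        rw [Finset.mem_filter] at he
        obtain ⟨heE, hcomm⟩ := he
        obtain ⟨x, y, hxy, hx, hy, rfl⟩ := exists_of_memE _ heE
        rw [Finset.mem_union, Finset.mem_image, Finset.mem_image]
        by_cases hxa : x = a
        · by_cases hyb : y = b
          · exfalso; apply hcomm; rw [hxa, hyb]
          · have hya' : y ≠ a := fun h => hxy (by rw [hxa, h])
            refine Or.inl ⟨y, memxy y hy hya' hyb, by rw [hxa]⟩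
        by_cases hxb : x = b
        · by_cases hya : y = a
          · exfalso; apply hcomm; rw [hxb, hya, Equiv.swap_comm b a]
          · have hyb' : y ≠ b := fun h => hxy (by rw [hxb, h])
            refine Or.inr ⟨y, memxy y hy hya hyb', by rw [hxb]⟩
        by_cases hya : y = a
        · refine Or.inl ⟨x, memxy x hx hxa hxb, by rw [hya]; exact Equiv.swap_comm a x⟩
        by_cases hyb : y = b
        · refine Or.inr ⟨x, memxy x hx hxa hxb, by rw [hyb]; exact Equiv.swap_comm b x⟩
        · exact absurd (commute_swap_of_disjoint hxa hxb hya hyb) hcomm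
      · intro he
        rw [Finset.mem_union, Finset.mem_image, Finset.mem_image] at he
        rw [Finset.mem_filter]
        rcases he with ⟨c, hc, rfl⟩ | ⟨c, hc, rfl⟩ <;>
          rw [Finset.mem_erase, Finset.mem_erase, memFm] at hc
        · exact ⟨memE_of a c (Ne.symm hc.2.1) ha hc.2.2,
            not_commute_swap (Ne.symm hc.2.1) hab hc.1⟩
        · refine ⟨memE_of b c (Ne.symm hc.1) hb hc.2.2, ?_⟩
          rw [Equiv.swap_comm a b]
          exact not_commute_swap (Ne.symm hc.1) (Ne.symm hab) hc.2.1
    have herasecard : ((Fm.erase a).erase b).card = m - 2 := by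
      rw [Finset.card_erase_of_mem (Finset.mem_erase.mpr ⟨Ne.symm hab, (memFm b).mpr hb⟩),
        Finset.card_erase_of_mem ((memFm a).mpr ha), hFm_card]
      omega
    have hinj1 : Set.InjOn (fun c => Equiv.swap a c) ((Fm.erase a).erase b) := by
      intro c hc c' hc' hcc
      rw [Finset.mem_coe, Finset.mem_erase, Finset.mem_erase] at hc hc'
      rcases swap_eq_swap_aux (Ne.symm hc.2.1) (Ne.symm hc'.2.1) hcc with ⟨-, h2⟩ | ⟨h1, h2⟩
      · exact h2
      · exact absurd h1.symm hc'.2.1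
    have hinj2 : Set.InjOn (fun c => Equiv.swap b c) ((Fm.erase a).erase b) := by
      intro c hc c' hc' hcc
      rw [Finset.mem_coe, Finset.mem_erase, Finset.mem_erase] at hc hc'
      rcases swap_eq_swap_aux (Ne.symm hc.1) (Ne.symm hc'.1) hcc with ⟨-, h2⟩ | ⟨h1, h2⟩
      · exact h2
      · exact absurd h1.symm hc'.1
    have hdisjim : Disjoint (((Fm.erase a).erase b).image (fun c => Equiv.swap a c))
        (((Fm.erase a).erase b).image (fun c => Equiv.swap b c)) := by
      rw [Finset.disjoint_left]
      rintro g hg1 hg2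
      obtain ⟨c, hc, rfl⟩ := Finset.mem_image.mp hg1
      obtain ⟨c', hc', hcc⟩ := Finset.mem_image.mp hg2
      rw [Finset.mem_erase, Finset.mem_erase] at hc hc'
      rcases swap_eq_swap_aux (Ne.symm hc'.1) (Ne.symm hc.2.1) hcc with ⟨h1, -⟩ | ⟨h1, -⟩
      · exact hab h1.symm
      · exact hc.1 h1.symm
    have hNcard : (E.filter (fun e => ¬ Commute e (swap a b))).card = (m-2) + (m-2) := by
      rw [hNeq, Finset.card_union_of_disjoint hdisjim, Finset.card_image_of_injOn hinj1,
        Finset.card_image_of_injOn hinj2, herasecard]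
    rw [part1, hNcongr, ← Finset.smul_sum, Finset.sum_sub_distrib, Finset.sum_add_distrib,
      hNconj, Finset.sum_const, hNcard, add_sub_cancel_left,
      ← Nat.cast_smul_eq_nsmul ℚ ((m-2)+(m-2)) (ρ (swap a b))]
    have hm2 : (((m-2) + (m-2) : ℕ) : ℚ) = 2*((m:ℚ) - 2) := by
      rw [Nat.cast_add, Nat.cast_sub (by omega : 2 ≤ m)]
      push_cast
      ring
    rw [hm2]
    match_scalars
    ring
  have lemB : ∀ a b : Fin n, a ≠ b → m ≤ (a : ℕ) → m ≤ (b : ℕ) →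
      ∑ e ∈ E, ρ e * ρ (swap a b) = 0 := by
    intro a b hab ha hb
    apply Finset.sum_eq_zero
    intro e he
    obtain ⟨x, y, hxy, hx, hy, rfl⟩ := exists_of_memE e he
    have hxa : x ≠ a := fun h => by rw [h] at hx; omega
    have hxb : x ≠ b := fun h => by rw [h] at hx; omega
    have hya : y ≠ a := fun h => by rw [h] at hy; omega
    have hyb : y ≠ b := fun h => by rw [h] at hy; omega
    refine hmul_comm _ _ (hswap x y hxy) (hswap a b hab) ?_
      (commute_swap_of_disjoint hxa hxb hya hyb)
    intro h
    rcases swap_eq_swap_aux hxy hab h with ⟨h1, -⟩ | ⟨h1, -⟩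
    · exact hxa h1
    · exact hxb h1
  have lemC : ∀ a b : Fin n, (a : ℕ) < m → m ≤ (b : ℕ) →
      ∑ e ∈ E, ρ e * ρ (swap a b)
        = (α/2) • ((∑ c ∈ Fm.erase a, ρ (swap a c)) + (m : ℚ) • ρ (swap a b)
            - ∑ c ∈ Fm, ρ (swap c b)) := by
    intro a b ha hb
    have hab : a ≠ b := fun h => by rw [h] at ha; omega
    have haF : a ∈ Fm := (memFm a).mpr ha
    rw [← Finset.sum_filter_add_sum_filter_not E (fun e => Commute e (swap a b))]
    have part1 : ∑ e ∈ E.filter (fun e => Commute e (swap a b)), ρ e * ρ (swap a b) = 0 := by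
      apply Finset.sum_eq_zero
      intro e he
      rw [Finset.mem_filter] at he
      refine hmul_comm _ _ (hEswap e he.1) (hswap a b hab) ?_ he.2
      obtain ⟨x, y, hxy, hx, hy, rfl⟩ := exists_of_memE e he.1
      intro h
      rcases swap_eq_swap_aux hxy hab h with ⟨-, h2⟩ | ⟨h1, -⟩
      · rw [h2] at hy; omega
      · rw [h1] at hx; omega
    have hNeq : E.filter (fun e => ¬ Commute e (swap a b))
        = (Fm.erase a).image (fun c => Equiv.swap a c) := by
      ext e
      rw [Finset.mem_filter, Finset.mem_image]
      constructor
      · rintro ⟨heE, hcomm⟩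
        obtain ⟨x, y, hxy, hx, hy, rfl⟩ := exists_of_memE _ heE
        have hxb : x ≠ b := fun h => by rw [h] at hx; omega
        have hyb : y ≠ b := fun h => by rw [h] at hy; omega
        by_cases hxa : x = a
        · exact ⟨y, Finset.mem_erase.mpr ⟨fun h => hxy (by rw [hxa, h]), (memFm y).mpr hy⟩,
            by rw [hxa]⟩
        by_cases hya : y = a
        · exact ⟨x, Finset.mem_erase.mpr ⟨hxa, (memFm x).mpr hx⟩,
            by rw [hya]; exact Equiv.swap_comm a x⟩
        · exact absurd (commute_swap_of_disjoint hxa hxb hya hyb) hcomm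
      · rintro ⟨c, hc, rfl⟩
        rw [Finset.mem_erase, memFm] at hc
        have hcb : c ≠ b := fun h => by rw [h] at hc; omega
        exact ⟨memE_of a c (Ne.symm hc.1) ha hc.2,
          not_commute_swap (Ne.symm hc.1) hab hcb⟩
    have hinj : ∀ x ∈ Fm.erase a, ∀ y ∈ Fm.erase a,
        Equiv.swap a x = Equiv.swap a y → x = y := by
      intro c hc c' hc' hcc
      rw [Finset.mem_erase] at hc hc'
      rcases swap_eq_swap_aux (Ne.symm hc.1) (Ne.symm hc'.1) hcc with ⟨-, h2⟩ | ⟨h1, h2⟩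
      · exact h2
      · exact absurd h1.symm hc'.1
    have hterm : ∀ c ∈ Fm.erase a, ρ (swap a c) * ρ (swap a b)
        = (α/2) • (ρ (swap a c) + ρ (swap a b) - ρ (swap c b)) := by
      intro c hc
      rw [Finset.mem_erase, memFm] at hc
      have hcb : c ≠ b := fun h => by rw [h] at hc; omega
      have h1 := hmul_ncomm (swap a c) (swap a b) (hswap a c (Ne.symm hc.1)) (hswap a b hab)
        (not_commute_swap (Ne.symm hc.1) hab hcb)
      rw [hdinv a b, hconj a b a c, Equiv.swap_apply_left,
        Equiv.swap_apply_of_ne_of_ne hc.1 hcb, Equiv.swap_comm b c] at h1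
      exact h1
    have hs : ∑ c ∈ Fm.erase a, ρ (swap c b) = (∑ c ∈ Fm, ρ (swap c b)) - ρ (swap a b) :=
      Finset.sum_erase_eq_sub haF
    rw [part1, zero_add, hNeq, Finset.sum_image hinj, Finset.sum_congr rfl hterm,
      ← Finset.smul_sum, Finset.sum_sub_distrib, Finset.sum_add_distrib, Finset.sum_const,
      Finset.card_erase_of_mem haF, hFm_card, hs,
      ← Nat.cast_smul_eq_nsmul ℚ (m-1), Nat.cast_sub (by omega : 1 ≤ m)]
    match_scalars <;> push_cast <;> ring
  -- derived multiplication facts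
  have mulE : ∀ y : A, idE * y = (1 + α * ((m : ℚ) - 2))⁻¹ • ∑ e ∈ E, ρ e * y := by
    intro y
    rw [hidE, smul_mul_assoc, Finset.sum_mul]
  have D1 : ∀ a b : Fin n, a ≠ b → (a : ℕ) < m → (b : ℕ) < m →
      idE * ρ (swap a b) = ρ (swap a b) := by
    intro a b hab ha hb
    rw [mulE, lemA a b hab ha hb, smul_smul, inv_mul_cancel₀ hden, one_smul]
  have D1' : ∀ e ∈ E, idE * ρ e = ρ e := by
    intro e he
    obtain ⟨x, y, hxy, hx, hy, rfl⟩ := exists_of_memE e he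
    exact D1 x y hxy hx hy
  have D2 : ∀ a b : Fin n, a ≠ b → m ≤ (a : ℕ) → m ≤ (b : ℕ) →
      idE * ρ (swap a b) = 0 := by
    intro a b hab ha hb
    rw [mulE, lemB a b hab ha hb, smul_zero]
  have DidE : idE * idE = idE := by
    calc idE * idE = (1 + α * ((m : ℚ) - 2))⁻¹ • ∑ e ∈ E, idE * ρ e := by
          nth_rewrite 2 [hidE]
          rw [mul_smul_comm, Finset.mul_sum]
      _ = (1 + α * ((m : ℚ) - 2))⁻¹ • ∑ e ∈ E, ρ e := by
          rw [Finset.sum_congr rfl (fun e he => D1' e he)]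
      _ = idE := hidE.symm
  have hU : ∀ a' : Fin n, a' ∈ Fm →
      idE * (∑ c ∈ Fm.erase a', ρ (swap a' c)) = ∑ c ∈ Fm.erase a', ρ (swap a' c) := by
    intro a' ha'
    rw [Finset.mul_sum]
    refine Finset.sum_congr rfl fun c hc => ?_
    rw [Finset.mem_erase, memFm] at hc
    exact D1 a' c (Ne.symm hc.1) ((memFm a').mp ha') hc.2
  have DC : ∀ a b : Fin n, (a : ℕ) < m → m ≤ (b : ℕ) →
      idE * ρ (swap a b) = ((1 + α * ((m : ℚ) - 2))⁻¹ * (α/2)) •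
        ((∑ c ∈ Fm.erase a, ρ (swap a c)) + (m : ℚ) • ρ (swap a b)
          - ∑ c ∈ Fm, ρ (swap c b)) := by
    intro a b ha hb
    rw [mulE, lemC a b ha hb, smul_smul]
  -- double sum identity
  have hoffsum : ∑ p ∈ Fm.offDiag, ρ (swap p.1 p.2)
      = ∑ c ∈ Fm, ∑ c' ∈ Fm.erase c, ρ (swap c c') := by
    rw [show Fm.offDiag = (Fm ×ˢ Fm).filter (fun a : Fin n × Fin n => a.1 ≠ a.2) from by ext; simp [and_assoc],
      Finset.sum_filter, Finset.sum_product]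
    refine Finset.sum_congr rfl fun c _ => ?_
    rw [← Finset.sum_filter]
    congr 1
    ext c'
    rw [Finset.mem_filter, Finset.mem_erase]
    exact ⟨fun h => ⟨fun hh => h.2 hh.symm, h.1⟩, fun h => ⟨h.2, fun hh => h.1 hh.symm⟩⟩
  have hEimg : E = (Fm.offDiag.filter fun p => p.1 < p.2).image
      (fun p => Equiv.swap p.1 p.2) := by
    ext g
    rw [Finset.mem_image]
    constructor
    · intro hg
      obtain ⟨x, y, hxy, hx, hy, rfl⟩ := exists_of_memE g hg
      rcases lt_trichotomy x y with h | h | h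
      · exact ⟨(x, y), Finset.mem_filter.mpr
          ⟨Finset.mem_offDiag.mpr ⟨(memFm x).mpr hx, (memFm y).mpr hy, hxy⟩, h⟩, rfl⟩
      · exact absurd h hxy
      · exact ⟨(y, x), Finset.mem_filter.mpr
          ⟨Finset.mem_offDiag.mpr ⟨(memFm y).mpr hy, (memFm x).mpr hx, Ne.symm hxy⟩, h⟩,
          Equiv.swap_comm y x⟩
    · rintro ⟨p, hp, rfl⟩
      rw [Finset.mem_filter, Finset.mem_offDiag] at hp
      exact memE_of p.1 p.2 hp.1.2.2 ((memFm p.1).mp hp.1.1) ((memFm p.2).mp hp.1.2.1)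
  have hpairinj : ∀ (s : Finset (Fin n)), ∀ p ∈ s.offDiag.filter (fun p => p.1 < p.2),
      ∀ q ∈ s.offDiag.filter (fun p => p.1 < p.2),
      Equiv.swap p.1 p.2 = Equiv.swap q.1 q.2 → p = q := by
    intro s p hp q hq h
    rw [Finset.mem_filter, Finset.mem_offDiag] at hp hq
    rcases swap_eq_swap_aux hp.1.2.2 hq.1.2.2 h with ⟨h1, h2⟩ | ⟨h1, h2⟩
    · exact Prod.ext h1 h2
    · exfalso
      have := hp.2
      rw [h1, h2] at this
      exact absurd (this.trans hq.2) (lt_irrefl _)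
  have hsumE : ∑ e ∈ E, ρ e = ∑ p ∈ Fm.offDiag.filter (fun p => p.1 < p.2),
      ρ (swap p.1 p.2) := by
    rw [hEimg, Finset.sum_image (hpairinj Fm)]
  have hdouble : ∑ c ∈ Fm, ∑ c' ∈ Fm.erase c, ρ (swap c c')
      = (∑ e ∈ E, ρ e) + ∑ e ∈ E, ρ e := by
    rw [← hoffsum, ← Finset.sum_filter_add_sum_filter_not Fm.offDiag (fun p => p.1 < p.2),
      hsumE]
    congr 1
    refine (Finset.sum_nbij' Prod.swap Prod.swap ?_ ?_ ?_ ?_ ?_).symm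
    · intro p hp
      rw [Finset.mem_filter, Finset.mem_offDiag] at hp ⊢
      exact ⟨⟨hp.1.2.1, hp.1.1, Ne.symm hp.1.2.2⟩, not_lt.mpr (le_of_lt hp.2)⟩
    · intro p hp
      rw [Finset.mem_filter, Finset.mem_offDiag] at hp ⊢
      refine ⟨⟨hp.1.2.1, hp.1.1, Ne.symm hp.1.2.2⟩, ?_⟩
      rcases lt_trichotomy p.2 p.1 with h | h | h
      · exact h
      · exact absurd h.symm hp.1.2.2
      · exact absurd h hp.2
    · intro p _; rfl
    · intro p _; rfl
    · intro p _
      exact congrArg ρ (Equiv.swap_comm p.1 p.2)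
  -- zero eigenvectors from mixed sums
  have D4 : ∀ b : Fin n, m ≤ (b : ℕ) →
      idE * (∑ c ∈ Fm, ρ (swap c b)) = α • idE := by
    intro b hb
    rw [Finset.mul_sum]
    have hterm : ∀ c ∈ Fm, idE * ρ (swap c b)
        = ((1 + α * ((m : ℚ) - 2))⁻¹ * (α/2)) •
          ((∑ c' ∈ Fm.erase c, ρ (swap c c')) + (m : ℚ) • ρ (swap c b)
            - ∑ c' ∈ Fm, ρ (swap c' b)) := by
      intro c hc
      exact DC c b ((memFm c).mp hc) hb
    rw [Finset.sum_congr rfl hterm, ← Finset.smul_sum, Finset.sum_sub_distrib,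
      Finset.sum_add_distrib, hdouble, Finset.sum_const, hFm_card, ← Finset.smul_sum, hidE]
    match_scalars
    · field_simp
      ring
    · ring
  have D5 : ∀ b : Fin n, m ≤ (b : ℕ) →
      idE * ((∑ c ∈ Fm, ρ (swap c b)) - α • idE) = 0 := by
    intro b hb
    rw [mul_sub, D4 b hb, mul_smul_comm, DidE, sub_self]
  -- eta eigenvectors
  have hn0 : 0 < n := by omega
  set a₀ : Fin n := ⟨0, hn0⟩ with ha₀def
  have ha₀lt : (a₀ : ℕ) < m := by simp [ha₀def]; omega
  have ha₀F : a₀ ∈ Fm := (memFm a₀).mpr ha₀lt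
  have h2den : 2 + 2 * α * ((m : ℚ) - 2) ≠ 0 := by
    intro h; apply hden; linarith
  have hKm : (1 + α * ((m : ℚ) - 2))⁻¹ * (α/2) * (m : ℚ) = η := by
    rw [hη]
    field_simp
  set t : ℚ := ((1 + α * ((m : ℚ) - 2))⁻¹ * (α/2)) / (η - 1) with htdef
  have hη1' : η - 1 ≠ 0 := sub_ne_zero.mpr hη1
  have ht : (1 + α * ((m : ℚ) - 2))⁻¹ * (α/2) + t = η * t := by
    rw [htdef]
    field_simp
    ring
  have D6 : ∀ a : Fin n, a ∈ Fm.erase a₀ → ∀ b : Fin n, m ≤ (b : ℕ) →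
      idE * ((ρ (swap a b) - ρ (swap a₀ b))
        + t • ((∑ c ∈ Fm.erase a, ρ (swap a c)) - ∑ c ∈ Fm.erase a₀, ρ (swap a₀ c)))
      = η • ((ρ (swap a b) - ρ (swap a₀ b))
        + t • ((∑ c ∈ Fm.erase a, ρ (swap a c)) - ∑ c ∈ Fm.erase a₀, ρ (swap a₀ c))) := by
    intro a ha b hb
    have haF : a ∈ Fm := (Finset.mem_erase.mp ha).2
    have halt : (a : ℕ) < m := (memFm a).mp haF
    have hUdiff : idE * ((∑ c ∈ Fm.erase a, ρ (swap a c))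
        - ∑ c ∈ Fm.erase a₀, ρ (swap a₀ c))
        = (∑ c ∈ Fm.erase a, ρ (swap a c)) - ∑ c ∈ Fm.erase a₀, ρ (swap a₀ c) := by
      rw [mul_sub, hU a haF, hU a₀ ha₀F]
    have D6a : idE * (ρ (swap a b) - ρ (swap a₀ b))
        = η • (ρ (swap a b) - ρ (swap a₀ b))
          + ((1 + α * ((m : ℚ) - 2))⁻¹ * (α/2)) •
            ((∑ c ∈ Fm.erase a, ρ (swap a c)) - ∑ c ∈ Fm.erase a₀, ρ (swap a₀ c)) := by
      rw [mul_sub, DC a b halt hb, DC a₀ b ha₀lt hb]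
      match_scalars <;>
        first
          | ring1
          | linear_combination hKm
          | linear_combination -hKm
          | linear_combination 2 * hKm
          | linear_combination (-2 : ℚ) * hKm
          | linear_combination 3 * hKm
          | linear_combination (-3 : ℚ) * hKm
          | linear_combination (3/2 : ℚ) * hKm
          | linear_combination (-3/2 : ℚ) * hKm
    rw [mul_add, mul_smul_comm, D6a, hUdiff, add_assoc, ← add_smul, ht, mul_smul,
      ← smul_add]
  -- basis from hypothesis and dimension of A
  have hrange : Set.range (fun d : {g : Perm (Fin n) // g.IsSwap} => ρ d.1)
      = ρ '' {g : Perm (Fin n) | g.IsSwap} := by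
    ext v
    constructor
    · rintro ⟨⟨g, hg⟩, rfl⟩; exact ⟨g, hg, rfl⟩
    · rintro ⟨g, hg, rfl⟩; exact ⟨⟨g, hg⟩, rfl⟩
  let B0 : Module.Basis {g : Perm (Fin n) // g.IsSwap} ℚ A :=
    Module.Basis.mk hindep (by rw [hrange, hspan])
  haveI : Module.Finite ℚ A := Module.Finite.of_basis B0
  have hSwapsImg : (univ.filter fun g : Perm (Fin n) => g.IsSwap)
      = (((univ : Finset (Fin n)).offDiag.filter fun p => p.1 < p.2).image
          (fun p => Equiv.swap p.1 p.2)) := by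
    ext g
    rw [Finset.mem_filter, Finset.mem_image]
    constructor
    · rintro ⟨-, x, y, hxy, rfl⟩
      rcases lt_trichotomy x y with h | h | h
      · exact ⟨(x, y), Finset.mem_filter.mpr
          ⟨Finset.mem_offDiag.mpr ⟨Finset.mem_univ _, Finset.mem_univ _, hxy⟩, h⟩, rfl⟩
      · exact absurd h hxy
      · exact ⟨(y, x), Finset.mem_filter.mpr
          ⟨Finset.mem_offDiag.mpr ⟨Finset.mem_univ _, Finset.mem_univ _, Ne.symm hxy⟩, h⟩,
          Equiv.swap_comm y x⟩
    · rintro ⟨p, hp, rfl⟩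
      rw [Finset.mem_filter, Finset.mem_offDiag] at hp
      exact ⟨Finset.mem_univ _, hswap p.1 p.2 hp.1.2.2⟩
  have hfinA : Module.finrank ℚ A = n * (n - 1) / 2 := by
    rw [Module.finrank_eq_card_basis B0, Fintype.card_subtype, hSwapsImg,
      Finset.card_image_of_injOn
        (fun p hp q hq h => hpairinj univ p (Finset.mem_coe.mp hp) q (Finset.mem_coe.mp hq) h),
      card_lt_offDiag, Finset.card_univ, Fintype.card_fin]
  -- index data for the eigenbasis
  set PF := Fm.offDiag.filter (fun p : Fin n × Fin n => p.1 < p.2) with hPFdef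
  set PG := Gm.offDiag.filter (fun p : Fin n × Fin n => p.1 < p.2) with hPGdef
  set EA := Fm.erase a₀ with hEAdef
  set fam : (↥PF ⊕ ((↥PG ⊕ ↥Gm) ⊕ (↥EA × ↥Gm))) → A :=
    Sum.elim (fun p => ρ (swap (p : Fin n × Fin n).1 (p : Fin n × Fin n).2))
      (Sum.elim
        (Sum.elim (fun p => ρ (swap (p : Fin n × Fin n).1 (p : Fin n × Fin n).2))
          (fun b => (∑ c ∈ Fm, ρ (swap c (b : Fin n))) - α • idE))
        (fun ab => (ρ (swap (ab.1 : Fin n) (ab.2 : Fin n)) - ρ (swap a₀ (ab.2 : Fin n)))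
          + t • ((∑ c ∈ Fm.erase (ab.1 : Fin n), ρ (swap (ab.1 : Fin n) c))
              - ∑ c ∈ Fm.erase a₀, ρ (swap a₀ c)))) with hfamdef
  set μf : (↥PF ⊕ ((↥PG ⊕ ↥Gm) ⊕ (↥EA × ↥Gm))) → ℚ :=
    Sum.elim (fun _ => 1) (Sum.elim (fun _ => 0) (fun _ => η)) with hμfdef
  have heig : ∀ i, idE * fam i = μf i • fam i := by
    rintro (⟨p, hp⟩ | ((⟨p, hp⟩ | ⟨b, hb⟩) | ⟨⟨a, haa⟩, ⟨b, hb⟩⟩))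
    · rw [hPFdef, Finset.mem_filter, Finset.mem_offDiag] at hp
      simp only [hfamdef, hμfdef, Sum.elim_inl, one_smul]
      exact D1 p.1 p.2 hp.1.2.2 ((memFm p.1).mp hp.1.1) ((memFm p.2).mp hp.1.2.1)
    · rw [hPGdef, Finset.mem_filter, Finset.mem_offDiag] at hp
      simp only [hfamdef, hμfdef, Sum.elim_inl, Sum.elim_inr, zero_smul]
      exact D2 p.1 p.2 hp.1.2.2 ((memGm p.1).mp hp.1.1) ((memGm p.2).mp hp.1.2.1)
    · simp only [hfamdef, hμfdef, Sum.elim_inl, Sum.elim_inr, zero_smul]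
      exact D5 b ((memGm b).mp hb)
    · simp only [hfamdef, hμfdef, Sum.elim_inr]
      exact D6 a haa b ((memGm b).mp hb)
  -- spanning
  have hPF_in : ∀ p (hp : p ∈ PF),
      ρ (swap p.1 p.2) ∈ Submodule.span ℚ (Set.range fam) :=
    fun p hp => Submodule.subset_span ⟨Sum.inl ⟨p, hp⟩, rfl⟩
  have hPG_in : ∀ p (hp : p ∈ PG),
      ρ (swap p.1 p.2) ∈ Submodule.span ℚ (Set.range fam) :=
    fun p hp => Submodule.subset_span ⟨Sum.inr (Sum.inl (Sum.inl ⟨p, hp⟩)), rfl⟩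
  have hE_in : ∀ e ∈ E, ρ e ∈ Submodule.span ℚ (Set.range fam) := by
    intro e he
    obtain ⟨x, y, hxy, hx, hy, rfl⟩ := exists_of_memE e he
    rcases lt_trichotomy x y with h | h | h
    · exact hPF_in (x, y) (Finset.mem_filter.mpr
        ⟨Finset.mem_offDiag.mpr ⟨(memFm x).mpr hx, (memFm y).mpr hy, hxy⟩, h⟩)
    · exact absurd h hxy
    · rw [Equiv.swap_comm x y]
      exact hPF_in (y, x) (Finset.mem_filter.mpr
        ⟨Finset.mem_offDiag.mpr ⟨(memFm y).mpr hy, (memFm x).mpr hx, Ne.symm hxy⟩, h⟩)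
  have hidE_in : idE ∈ Submodule.span ℚ (Set.range fam) := by
    rw [hidE]
    exact Submodule.smul_mem _ _ (Submodule.sum_mem _ (fun e he => hE_in e he))
  have hu_in : ∀ a ∈ Fm, (∑ c ∈ Fm.erase a, ρ (swap a c))
      ∈ Submodule.span ℚ (Set.range fam) := by
    intro a ha
    refine Submodule.sum_mem _ (fun c hc => ?_)
    rw [Finset.mem_erase, memFm] at hc
    exact hE_in _ (memE_of a c (Ne.symm hc.1) ((memFm a).mp ha) hc.2)
  have hs_in : ∀ b ∈ Gm, (∑ c ∈ Fm, ρ (swap c b))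
      ∈ Submodule.span ℚ (Set.range fam) := by
    intro b hb
    have hw : ((∑ c ∈ Fm, ρ (swap c b)) - α • idE)
        ∈ Submodule.span ℚ (Set.range fam) :=
      Submodule.subset_span ⟨Sum.inr (Sum.inl (Sum.inr ⟨b, hb⟩)), rfl⟩
    have := Submodule.add_mem _ hw (Submodule.smul_mem _ α hidE_in)
    rwa [sub_add_cancel] at this
  have hdx_in : ∀ a (ha : a ∈ EA) b (hb : b ∈ Gm),
      (ρ (swap a b) - ρ (swap a₀ b)) ∈ Submodule.span ℚ (Set.range fam) := by
    intro a ha b hb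
    have hv : ((ρ (swap a b) - ρ (swap a₀ b))
        + t • ((∑ c ∈ Fm.erase a, ρ (swap a c)) - ∑ c ∈ Fm.erase a₀, ρ (swap a₀ c)))
        ∈ Submodule.span ℚ (Set.range fam) :=
      Submodule.subset_span ⟨Sum.inr (Sum.inr (⟨a, ha⟩, ⟨b, hb⟩)), rfl⟩
    have haF : a ∈ Fm := (Finset.mem_erase.mp ha).2
    have := Submodule.sub_mem _ hv (Submodule.smul_mem _ t
      (Submodule.sub_mem _ (hu_in a haF) (hu_in a₀ ha₀F)))
    rwa [add_sub_cancel_right] at this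
  have hm0 : (m : ℚ) ≠ 0 := by
    simp only [ne_eq, Nat.cast_eq_zero]
    omega
  have hx0_in : ∀ b ∈ Gm, ρ (swap a₀ b) ∈ Submodule.span ℚ (Set.range fam) := by
    intro b hb
    have hsum : (∑ a ∈ EA, (ρ (swap a b) - ρ (swap a₀ b)))
        ∈ Submodule.span ℚ (Set.range fam) :=
      Submodule.sum_mem _ (fun a ha => hdx_in a ha b hb)
    have hid : (m : ℚ) • ρ (swap a₀ b)
        = (∑ c ∈ Fm, ρ (swap c b)) - ∑ a ∈ EA, (ρ (swap a b) - ρ (swap a₀ b)) := by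
      rw [← Finset.add_sum_erase Fm _ ha₀F, Finset.sum_sub_distrib, Finset.sum_const,
        hEAdef, Finset.card_erase_of_mem ha₀F, hFm_card,
        ← Nat.cast_smul_eq_nsmul ℚ (m-1), Nat.cast_sub (by omega : 1 ≤ m)]
      match_scalars <;> push_cast <;> ring
    have hmem : ((m : ℚ) • ρ (swap a₀ b)) ∈ Submodule.span ℚ (Set.range fam) := by
      rw [hid]
      exact Submodule.sub_mem _ (hs_in b hb) hsum
    have := Submodule.smul_mem _ (m : ℚ)⁻¹ hmem
    rwa [inv_smul_smul₀ hm0] at this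
  have hmix_in : ∀ a ∈ Fm, ∀ b ∈ Gm,
      ρ (swap a b) ∈ Submodule.span ℚ (Set.range fam) := by
    intro a ha b hb
    by_cases haa : a = a₀
    · rw [haa]; exact hx0_in b hb
    · have hEA : a ∈ EA := Finset.mem_erase.mpr ⟨haa, ha⟩
      have := Submodule.add_mem _ (hdx_in a hEA b hb) (hx0_in b hb)
      rwa [sub_add_cancel] at this
  have hspan2 : ⊤ ≤ Submodule.span ℚ (Set.range fam) := by
    rw [← hspan, Submodule.span_le]
    rintro _ ⟨g, hg, rfl⟩
    obtain ⟨x, y, hxy, rfl⟩ := hg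
    have key : ∀ x y : Fin n, x ≠ y →
        ρ (swap x y) ∈ Submodule.span ℚ (Set.range fam) := by
      intro x y hxy
      by_cases hx : (x : ℕ) < m
      · by_cases hy : (y : ℕ) < m
        · exact hE_in _ (memE_of x y hxy hx hy)
        · exact hmix_in x ((memFm x).mpr hx) y ((memGm y).mpr (not_lt.mp hy))
      · by_cases hy : (y : ℕ) < m
        · rw [Equiv.swap_comm x y]
          exact hmix_in y ((memFm y).mpr hy) x ((memGm x).mpr (not_lt.mp hx))
        · rcases lt_trichotomy x y with h | h | h
          · exact hPG_in (x, y) (Finset.mem_filter.mpr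
              ⟨Finset.mem_offDiag.mpr ⟨(memGm x).mpr (not_lt.mp hx),
                (memGm y).mpr (not_lt.mp hy), hxy⟩, h⟩)
          · exact absurd h hxy
          · rw [Equiv.swap_comm x y]
            exact hPG_in (y, x) (Finset.mem_filter.mpr
              ⟨Finset.mem_offDiag.mpr ⟨(memGm y).mpr (not_lt.mp hy),
                (memGm x).mpr (not_lt.mp hx), Ne.symm hxy⟩, h⟩)
    exact key x y hxy
  -- cardinalities
  have hPFcard : PF.card = m * (m-1) / 2 := by
    rw [hPFdef, card_lt_offDiag, hFm_card]
  have hPGcard : PG.card = (n-m) * ((n-m) - 1) / 2 := by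
    rw [hPGdef, card_lt_offDiag, hGm_card]
  have hEAcard : EA.card = m - 1 := by
    rw [hEAdef, Finset.card_erase_of_mem ha₀F, hFm_card]
  have hcardI : Fintype.card (↥PF ⊕ ((↥PG ⊕ ↥Gm) ⊕ (↥EA × ↥Gm))) = n * (n-1) / 2 := by
    simp only [Fintype.card_sum, Fintype.card_prod, Fintype.card_coe, hPFcard, hPGcard,
      hGm_card, hEAcard]
    have h1 := nat_half_succ (n-m)
    have h2 := nat_dim_sum m n (by omega) hmn.le
    omega
  let C : Module.Basis (↥PF ⊕ ((↥PG ⊕ ↥Gm) ⊕ (↥EA × ↥Gm))) ℚ A :=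
    basisOfTopLeSpanOfCardEqFinrank fam hspan2 (by rw [hcardI, hfinA])
  have hCc : ⇑C = fam := coe_basisOfTopLeSpanOfCardEqFinrank fam _ _
  have heigC : ∀ ν : ℚ, Module.End.eigenspace (LinearMap.mulLeft ℚ idE) ν
      = Submodule.span ℚ (⇑C '' {i | μf i = ν}) :=
    eigenspace_eq_span_of_basis C _ μf
      (fun i => by rw [hCc, LinearMap.mulLeft_apply]; exact heig i)
  -- eigenvalue sets
  have hset1 : {i | μf i = (1 : ℚ)} = Set.range Sum.inl := by
    ext i
    rcases i with p | ((p | b) | ab) <;>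
      simp [hμfdef, hη1]
  have hset0 : {i | μf i = (0 : ℚ)}
      = Set.range (fun x : ↥PG ⊕ ↥Gm => (Sum.inr (Sum.inl x) :
          ↥PF ⊕ ((↥PG ⊕ ↥Gm) ⊕ (↥EA × ↥Gm)))) := by
    ext i
    rcases i with p | ((p | b) | ab) <;>
      simp [hμfdef, hη0]
  have hsetη : {i | μf i = η}
      = Set.range (fun x : ↥EA × ↥Gm => (Sum.inr (Sum.inr x) :
          ↥PF ⊕ ((↥PG ⊕ ↥Gm) ⊕ (↥EA × ↥Gm)))) := by
    ext i
    rcases i with p | ((p | b) | ab) <;>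
      simp [hμfdef, Ne.symm hη0, Ne.symm hη1]
  -- dimensions of eigenspaces
  have hfr1 : Module.finrank ℚ
      (Module.End.eigenspace (LinearMap.mulLeft ℚ idE) 1) = m * (m-1) / 2 := by
    rw [heigC 1, hset1, ← Set.range_comp,
      finrank_span_eq_card (C.linearIndependent.comp Sum.inl Sum.inl_injective),
      Fintype.card_coe, hPFcard]
  have hfr0 : Module.finrank ℚ
      (Module.End.eigenspace (LinearMap.mulLeft ℚ idE) 0) = (n-m) * (n-m+1) / 2 := by
    rw [heigC 0, hset0, ← Set.range_comp,
      finrank_span_eq_card (C.linearIndependent.comp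
        (fun x : ↥PG ⊕ ↥Gm => (Sum.inr (Sum.inl x) :
          ↥PF ⊕ ((↥PG ⊕ ↥Gm) ⊕ (↥EA × ↥Gm))))
        (fun x y h => Sum.inl_injective (Sum.inr_injective h)))]
    simp only [Fintype.card_sum, Fintype.card_coe, hPGcard, hGm_card]
    have h1 := nat_half_succ (n-m)
    omega
  have hfrη : Module.finrank ℚ
      (Module.End.eigenspace (LinearMap.mulLeft ℚ idE) η) = (m-1) * (n-m) := by
    rw [heigC η, hsetη, ← Set.range_comp,
      finrank_span_eq_card (C.linearIndependent.comp
        (fun x : ↥EA × ↥Gm => (Sum.inr (Sum.inr x) :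
          ↥PF ⊕ ((↥PG ⊕ ↥Gm) ⊕ (↥EA × ↥Gm))))
        (fun x y h => Sum.inr_injective (Sum.inr_injective h)))]
    simp only [Fintype.card_prod, Fintype.card_coe, hEAcard, hGm_card]
  -- witnesses
  have hf1 : (1 : ℕ) < n := by omega
  have hp₀ : ((a₀, ⟨1, hf1⟩) : Fin n × Fin n) ∈ PF := by
    rw [hPFdef, Finset.mem_filter, Finset.mem_offDiag]
    refine ⟨⟨ha₀F, (memFm _).mpr (by simp; omega), ?_⟩, ?_⟩
    · intro h
      have := congrArg Fin.val h
      simp [ha₀def] at this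
    · show a₀ < (⟨1, hf1⟩ : Fin n)
      rw [Fin.lt_def]
      simp [ha₀def]
  have hfmG : (⟨m, hmn⟩ : Fin n) ∈ Gm := (memGm _).mpr (by simp)
  have hf1EA : (⟨1, hf1⟩ : Fin n) ∈ EA := by
    rw [hEAdef, Finset.mem_erase]
    refine ⟨?_, (memFm _).mpr (by simp; omega)⟩
    intro h
    have := congrArg Fin.val h
    simp [ha₀def] at this
  -- eigenvalue characterization
  have hiff : ∀ μ : ℚ, Module.End.eigenspace (LinearMap.mulLeft ℚ idE) μ ≠ ⊥
      ↔ μ ∈ ({1, 0, η} : Set ℚ) := by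
    intro μ
    constructor
    · intro hne
      by_contra hμ
      apply hne
      have hempty : {i | μf i = μ} = ∅ := by
        ext i
        simp only [Set.mem_setOf_eq, Set.mem_empty_iff_false, iff_false]
        intro h
        apply hμ
        rcases i with p | ((p | b) | ab)
        · rw [← h]; left; simp [hμfdef]
        · rw [← h]; right; left; simp [hμfdef]
        · rw [← h]; right; left; simp [hμfdef]
        · rw [← h]; right; right; simp [hμfdef]
      rw [heigC μ, hempty, Set.image_empty, Submodule.span_empty]
    · intro hμ hbot
      have hCzero : ∀ i, μf i = μ → C i = 0 := by
        intro i hi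
        have hmem : C i ∈ Module.End.eigenspace (LinearMap.mulLeft ℚ idE) μ := by
          rw [heigC μ]
          exact Submodule.subset_span ⟨i, hi, rfl⟩
        rw [hbot, Submodule.mem_bot] at hmem
        exact hmem
      rcases hμ with h1 | h0 | hh
      · exact C.ne_zero (Sum.inl ⟨(a₀, ⟨1, hf1⟩), hp₀⟩)
          (hCzero _ (by rw [h1]; simp [hμfdef]))
      · exact C.ne_zero (Sum.inr (Sum.inl (Sum.inr ⟨⟨m, hmn⟩, hfmG⟩)))
          (hCzero _ (by rw [h0]; simp [hμfdef]))
      · exact C.ne_zero (Sum.inr (Sum.inr (⟨⟨1, hf1⟩, hf1EA⟩, ⟨⟨m, hmn⟩, hfmG⟩)))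
          (hCzero _ (by rw [hh]; simp [hμfdef]))
  exact ⟨hiff, hfr1, hfr0, hfrη, nat_dim_sum m n (by omega) hmn.le, hfinA⟩
end

section
/- If (G,D) is a k-regular 3-transposition group with 2 + αk ≠ 0, then the central charge of the Matsuo algebra A^α_3(G,D), defined as (1/2)⟨id_A, id_A⟩, equals |D|/(2+αk). -/
open Finset

open scoped Classical in
/-- if `(G,D)` is a `k`-regular 3-transposition group with `2+αk ≠ 0`,
then the central charge `(1/2)⟨id_A, id_A⟩` of the Matsuo algebra `A^α_3(G,D)` equals
`|D|/(2+αk)`. -/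
theorem matsuo_central_charge {G A : Type*} [Group G]
    [NonUnitalNonAssocCommRing A] [Module ℚ A] [SMulCommClass ℚ A A] [IsScalarTower ℚ A A]
    (D : Finset G) (α : ℚ) (hα0 : α ≠ 0) (hα1 : α ≠ 1) (ρ : G → A)
    (hinv : ∀ d ∈ D, d * d = 1) (hne1 : ∀ d ∈ D, d ≠ 1)
    (hnorm : ∀ c ∈ D, ∀ g : G, g⁻¹ * c * g ∈ D)
    (h3trans : ∀ c ∈ D, ∀ d ∈ D, orderOf (c * d) ≤ 3)
    (B : A →ₗ[ℚ] A →ₗ[ℚ] ℚ)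
    (hB : ∀ c ∈ D, ∀ d ∈ D,
      B (ρ c) (ρ d) = if c = d then 1 else if Commute c d then 0 else α / 2)
    (k : ℕ) (hreg : ∀ d ∈ D, (D.filter fun c => ¬ Commute c d).card = k)
    (hden : 2 + α * k ≠ 0)
    (idA : A) (hidA : idA = (1 + α * k / 2)⁻¹ • ∑ d ∈ D, ρ d) :
    (1/2 : ℚ) * B idA idA = (D.card : ℚ) / (2 + α * k) := by
  have hc : (1 + α * k / 2) ≠ 0 := by
    intro h; apply hden; linarith
  have key : B (∑ d ∈ D, ρ d) (∑ d ∈ D, ρ d) = D.card * (1 + α * k / 2) := by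
    simp only [map_sum, LinearMap.sum_apply]
    rw [Finset.sum_comm]
    have : ∀ c ∈ D, ∑ d ∈ D, B (ρ c) (ρ d) = 1 + α * k / 2 := by
      intro c hc'
      have step : ∀ d ∈ D, B (ρ c) (ρ d)
          = (if c = d then (1:ℚ) else 0) + (if ¬ Commute c d then α/2 else 0) := by
        intro d hd
        rw [hB c hc' d hd]
        by_cases h1 : c = d
        · subst h1; simp
        · by_cases h2 : Commute c d <;> simp [h1, h2]
      rw [Finset.sum_congr rfl step, Finset.sum_add_distrib]
      have e1 : ∑ d ∈ D, (if c = d then (1:ℚ) else 0) = 1 := by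
        rw [Finset.sum_ite_eq D c (fun _ => (1:ℚ)), if_pos hc']
      have e2 : ∑ d ∈ D, (if ¬ Commute c d then α/2 else 0) = α * k / 2 := by
        rw [Finset.sum_ite, Finset.sum_const_zero, add_zero, Finset.sum_const]
        have : (D.filter fun d => ¬ Commute c d) = (D.filter fun d => ¬ Commute d c) := by
          apply Finset.filter_congr
          intro d _
          simp [Commute.symm_iff (a := c)]
        rw [this, hreg c hc']
        ring
      rw [e1, e2]
    rw [Finset.sum_congr rfl this, Finset.sum_const]
    push_cast; ring
  rw [hidA, map_smul, map_smul, LinearMap.smul_apply, smul_eq_mul, smul_eq_mul, key]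

  field_simp
end

section
/- Let (K,F) ≤ (H,E) ≤ (G,D) be a chain of 3-transposition groups with F = K∩D, E = H∩D, and suppose (K,F) is k_F-regular and (H,E) is k_E-regular. Then in A^α_3(G,D), ⟨id_E, id_F⟩ = ⟨id_F, id_F⟩ = |F|/(1 + αk_F/2). -/
open Finset

open scoped Classical in
/-- for a chain `(K,F) ≤ (H,E) ≤ (G,D)` of 3-transposition groups with
`(K,F)` `k_F`-regular and `(H,E)` `k_E`-regular, in `A^α_3(G,D)` one has
`⟨id_E, id_F⟩ = ⟨id_F, id_F⟩ = |F|/(1+αk_F/2)`. -/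
theorem matsuo_form_nested_identities {G A : Type*} [Group G]
    [NonUnitalNonAssocCommRing A] [Module ℚ A] [SMulCommClass ℚ A A] [IsScalarTower ℚ A A]
    (D E F : Finset G) (hFE : F ⊆ E) (hED : E ⊆ D)
    (α : ℚ) (hα0 : α ≠ 0) (hα1 : α ≠ 1) (ρ : G → A)
    (hinv : ∀ d ∈ D, d * d = 1) (hne1 : ∀ d ∈ D, d ≠ 1)
    (hnorm : ∀ c ∈ D, ∀ g : G, g⁻¹ * c * g ∈ D)
    (h3trans : ∀ c ∈ D, ∀ d ∈ D, orderOf (c * d) ≤ 3)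
    (B : A →ₗ[ℚ] A →ₗ[ℚ] ℚ)
    (hB : ∀ c ∈ D, ∀ d ∈ D,
      B (ρ c) (ρ d) = if c = d then 1 else if Commute c d then 0 else α / 2)
    (kE kF : ℕ)
    (hregE : ∀ e ∈ E, (E.filter fun c => ¬ Commute c e).card = kE)
    (hregF : ∀ f ∈ F, (F.filter fun c => ¬ Commute c f).card = kF)
    (hdenE : 1 + α * kE / 2 ≠ 0) (hdenF : 1 + α * kF / 2 ≠ 0)
    (idE idF : A)
    (hidE : idE = (1 + α * kE / 2)⁻¹ • ∑ e ∈ E, ρ e)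
    (hidF : idF = (1 + α * kF / 2)⁻¹ • ∑ f ∈ F, ρ f) :
    B idE idF = B idF idF ∧ B idF idF = (F.card : ℚ) / (1 + α * kF / 2) := by
  have hFD : F ⊆ D := hFE.trans hED
  -- key: inner sum over a set S containing f with regularity count k
  have hsum : ∀ f ∈ F, ∀ (S : Finset G) (k : ℕ), S ⊆ D → f ∈ S →
      (S.filter fun c => ¬ Commute c f).card = k →
      (∑ e ∈ S, B (ρ e) (ρ f)) = 1 + α * k / 2 := by
    intro f hf S k hSD hfS hk
    have h1 : (∑ e ∈ S, B (ρ e) (ρ f)) =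
        ∑ e ∈ S, ((if e = f then (1:ℚ) else 0) +
          (if ¬ Commute e f then α / 2 else 0)) := by
      refine Finset.sum_congr rfl fun e he => ?_
      rw [hB e (hSD he) f (hFD hf)]
      by_cases h1 : e = f
      · subst h1; simp [Commute.refl]
      · by_cases h2 : Commute e f <;> simp [h1, h2]
    rw [h1, Finset.sum_add_distrib, Finset.sum_ite_eq' S f (fun _ => (1:ℚ)),
      if_pos hfS, ← Finset.sum_filter, Finset.sum_const, hk]
    push_cast
    ring
  -- expansion of the bilinear form on scaled sums
  have expand : ∀ (c c' : ℚ) (S T : Finset G),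
      B (c • ∑ s ∈ S, ρ s) (c' • ∑ t ∈ T, ρ t) =
        c * (c' * ∑ t ∈ T, ∑ s ∈ S, B (ρ s) (ρ t)) := by
    intro c c' S T
    simp only [map_smul, map_sum, LinearMap.sum_apply, LinearMap.smul_apply, smul_eq_mul,
      Finset.sum_apply, Finset.mul_sum, Finset.sum_mul]
    exact Finset.sum_congr rfl fun t _ => Finset.sum_congr rfl fun s _ => by ring
  have hEF : B idE idF = (F.card : ℚ) / (1 + α * kF / 2) := by
    rw [hidE, hidF, expand]
    have : (∑ t ∈ F, ∑ s ∈ E, B (ρ s) (ρ t)) = F.card * (1 + α * kE / 2) := by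
      rw [Finset.sum_congr rfl fun t ht =>
        hsum t ht E kE hED (hFE ht) (hregE t (hFE ht))]
      rw [Finset.sum_const, nsmul_eq_mul]
    rw [this, eq_div_iff hdenF]
    linear_combination (F.card : ℚ) * ((1 + α * kF / 2)⁻¹ * (1 + α * kF / 2)) *
        inv_mul_cancel₀ hdenE + (F.card : ℚ) * inv_mul_cancel₀ hdenF
  have hFF : B idF idF = (F.card : ℚ) / (1 + α * kF / 2) := by
    rw [hidF, expand]
    have : (∑ t ∈ F, ∑ s ∈ F, B (ρ s) (ρ t)) = F.card * (1 + α * kF / 2) := by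
      rw [Finset.sum_congr rfl fun t ht => hsum t ht F kF hFD ht (hregF t ht)]
      rw [Finset.sum_const, nsmul_eq_mul]
    rw [this, eq_div_iff hdenF]
    linear_combination (F.card : ℚ) * ((1 + α * kF / 2)⁻¹ * (1 + α * kF / 2) + 1) *
        inv_mul_cancel₀ hdenF
  exact ⟨hEF.trans hFF.symm, hFF⟩
end

section
/- The coset axis x_m = x_{A_m/A_{m-1}} in the Matsuo algebra of the Weyl group of A_n (i.e., id_{Sym(m+1)} - id_{Sym(m)}) has central charge m(2+α(m-3)) / (4(1+α(m-1))(1+α(m-2))). In particular, specializing α = 1/4 gives central charge 1 - 6/((m+2)(m+3)) = m(m+5)/((m+2)(m+3)). -/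
open Finset Equiv

namespace CCAmAux

open scoped Classical

variable {N : ℕ}

/-- ordered pairs with both coordinates < k -/
def pairs (N k : ℕ) : Finset (Fin N × Fin N) :=
  univ.filter fun p => (p.1 : ℕ) < (p.2 : ℕ) ∧ (p.2 : ℕ) < k

lemma mem_pairs {k : ℕ} {p : Fin N × Fin N} :
    p ∈ pairs N k ↔ (p.1 : ℕ) < (p.2 : ℕ) ∧ (p.2 : ℕ) < k := by
  simp [pairs]

lemma pairs_mono {k j : ℕ} (h : k ≤ j) : pairs N k ⊆ pairs N j := by
  intro p hp; rw [mem_pairs] at hp ⊢; omega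

lemma card_filter_lt {k : ℕ} (hk : k ≤ N) :
    (univ.filter fun x : Fin N => (x : ℕ) < k).card = k := by
  have himg : (univ.filter fun x : Fin N => (x : ℕ) < k)
      = (univ : Finset (Fin k)).image (Fin.castLE hk) := by
    ext x
    simp only [mem_filter, mem_univ, true_and, mem_image]
    constructor
    · intro h; exact ⟨⟨(x : ℕ), h⟩, by ext; simp⟩
    · rintro ⟨y, -, rfl⟩; exact y.isLt
  rw [himg, card_image_of_injective _ (Fin.castLE_injective hk), card_univ, Fintype.card_fin]

lemma card_pairs {k : ℕ} (hk : k ≤ N) : 2 * (pairs N k).card = k * (k - 1) := by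
  have h1 : (pairs N k).card
      = ∑ b : Fin N, if (b : ℕ) < k then (b : ℕ) else 0 := by
    rw [pairs, Finset.card_filter, Fintype.sum_prod_type_right]
    refine Finset.sum_congr rfl fun b _ => ?_
    by_cases hbk : (b : ℕ) < k
    · simp only [hbk, and_true, if_true]
      rw [← Finset.card_filter]
      exact card_filter_lt (le_of_lt b.isLt)
    · simp [hbk]
  have h2 : (∑ b : Fin N, if (b : ℕ) < k then (b : ℕ) else 0)
      = ∑ i ∈ Finset.range k, i := by
    rw [← Finset.sum_filter]
    have himg : (univ.filter fun x : Fin N => (x : ℕ) < k)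
        = (univ : Finset (Fin k)).image (Fin.castLE hk) := by
      ext x
      simp only [mem_filter, mem_univ, true_and, mem_image]
      constructor
      · intro h; exact ⟨⟨(x : ℕ), h⟩, by ext; simp⟩
      · rintro ⟨y, -, rfl⟩; exact y.isLt
    rw [himg, Finset.sum_image (fun a _ b _ h => Fin.castLE_injective hk h)]
    simp only [Fin.coe_castLE]
    exact Fin.sum_univ_eq_sum_range (fun i => i) k
  rw [h1, h2, mul_comm]
  exact Finset.sum_range_id_mul_two k

lemma swap_inj {a b c d : Fin N} (hab : (a : ℕ) < b) (hcd : (c : ℕ) < d)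
    (h : Equiv.swap a b = Equiv.swap c d) : a = c ∧ b = d := by
  have hcd' : c ≠ d := fun e => by rw [e] at hcd; omega
  by_cases hac : a = c
  · subst hac
    have h1 : Equiv.swap a b a = Equiv.swap a d a := by rw [h]
    rw [Equiv.swap_apply_left, Equiv.swap_apply_left] at h1
    exact ⟨rfl, h1⟩
  · exfalso
    have h1 : Equiv.swap a b c = d := by rw [h, Equiv.swap_apply_left]
    by_cases hbc : c = b
    · rw [hbc, Equiv.swap_apply_right] at h1
      have e1 : (a : ℕ) = (d : ℕ) := congrArg Fin.val h1
      have e2 : (c : ℕ) = (b : ℕ) := congrArg Fin.val hbc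
      omega
    · rw [Equiv.swap_apply_of_ne_of_ne (fun e => hac e.symm) hbc] at h1
      exact hcd' h1

lemma noncomm {a b d : Fin N} (hab : a ≠ b) (had : a ≠ d) (hbd : b ≠ d) :
    ¬ Commute (Equiv.swap a b) (Equiv.swap a d) := by
  intro h
  have h2 := congrArg (fun σ : Perm (Fin N) => σ b) h
  simp only [Perm.mul_apply] at h2
  rw [Equiv.swap_apply_of_ne_of_ne hab.symm hbd, Equiv.swap_apply_right,
    Equiv.swap_apply_left] at h2
  exact had h2

lemma comm_of_disjoint {a b c d : Fin N} (h1 : a ≠ c) (h2 : a ≠ d) (h3 : b ≠ c) (h4 : b ≠ d) :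
    Commute (Equiv.swap a b) (Equiv.swap c d) := by
  apply Equiv.Perm.Disjoint.commute
  intro x
  by_cases hxa : x = a
  · subst hxa; right; exact Equiv.swap_apply_of_ne_of_ne h1 h2
  by_cases hxb : x = b
  · subst hxb; right; exact Equiv.swap_apply_of_ne_of_ne h3 h4
  · left; exact Equiv.swap_apply_of_ne_of_ne hxa hxb

/-- the Gram-matrix weight for two ordered pairs -/
noncomputable def wgt (α : ℚ) (p q : Fin N × Fin N) : ℚ :=
  if Equiv.swap p.1 p.2 = Equiv.swap q.1 q.2 then 1
  else if Commute (Equiv.swap p.1 p.2) (Equiv.swap q.1 q.2) then 0 else α / 2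

lemma wgt_symm (α : ℚ) (p q : Fin N × Fin N) : wgt α p q = wgt α q p := by
  unfold wgt
  by_cases h1 : Equiv.swap p.1 p.2 = Equiv.swap q.1 q.2
  · simp [h1]
  · have h1' : ¬ Equiv.swap q.1 q.2 = Equiv.swap p.1 p.2 := fun e => h1 e.symm
    by_cases h2 : Commute (Equiv.swap p.1 p.2) (Equiv.swap q.1 q.2)
    · simp [h1, h1', h2, h2.symm]
    · have h2' : ¬ Commute (Equiv.swap q.1 q.2) (Equiv.swap p.1 p.2) := fun e => h2 e.symm
      simp [h1, h1', h2, h2']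

lemma sum_S {k : ℕ} (hk : k ≤ N) {M : Type*} [AddCommMonoid M]
    (S : Finset (Perm (Fin N)))
    (hS : ∀ g, g ∈ S ↔ (g.IsSwap ∧ ∀ x : Fin N, k ≤ (x : ℕ) → g x = x))
    (f : Perm (Fin N) → M) :
    ∑ g ∈ S, f g = ∑ p ∈ pairs N k, f (Equiv.swap p.1 p.2) := by
  refine (Finset.sum_bij (fun p _ => Equiv.swap p.1 p.2) ?_ ?_ ?_ ?_).symm
  · intro p hp
    rw [mem_pairs] at hp
    have hne : p.1 ≠ p.2 := fun e => by rw [e] at hp; omega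
    refine (hS _).mpr ⟨⟨p.1, p.2, hne, rfl⟩, ?_⟩
    intro x hx
    apply Equiv.swap_apply_of_ne_of_ne
    · intro e; rw [e] at hx; omega
    · intro e; rw [e] at hx; omega
  · intro p hp q hq h
    rw [mem_pairs] at hp hq
    obtain ⟨e1, e2⟩ := swap_inj hp.1 hq.1 h
    exact Prod.ext e1 e2
  · intro g hg
    obtain ⟨⟨a, b, hab, rfl⟩, hfix⟩ := (hS g).mp hg
    have hvne : (a : ℕ) ≠ (b : ℕ) := fun e => hab (Fin.ext e)
    rcases Nat.lt_or_ge (a : ℕ) (b : ℕ) with h | h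
    · refine ⟨(a, b), ?_, rfl⟩
      rw [mem_pairs]
      refine ⟨h, ?_⟩
      by_contra hb
      have hfb := hfix b (le_of_not_gt hb)
      rw [Equiv.swap_apply_right] at hfb
      exact hab hfb
    · have hba : (b : ℕ) < (a : ℕ) := by omega
      refine ⟨(b, a), ?_, (Equiv.swap_comm a b).symm⟩
      rw [mem_pairs]
      refine ⟨hba, ?_⟩
      by_contra ha
      have hfa := hfix a (le_of_not_gt ha)
      rw [Equiv.swap_apply_left] at hfa
      exact hab hfa.symm
  · intro p hp
    rfl

lemma card_noncomm {j : ℕ} (hj : j ≤ N) {q : Fin N × Fin N} (hq : q ∈ pairs N j) :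
    ((pairs N j).filter fun p =>
        p ≠ q ∧ ¬ Commute (Equiv.swap p.1 p.2) (Equiv.swap q.1 q.2)).card
      = 2 * (j - 2) := by
  obtain ⟨hq1, hq2⟩ := mem_pairs.mp hq
  set c := q.1 with hc
  set d := q.2 with hd
  have hcdne : c ≠ d := fun e => by rw [e] at hq1; omega
  have hsub : ({c, d} : Finset (Fin N)) ⊆ univ.filter fun x : Fin N => (x : ℕ) < j := by
    intro x hx
    simp only [mem_insert, mem_singleton] at hx
    rw [mem_filter]
    rcases hx with rfl | rfl
    · exact ⟨mem_univ _, by omega⟩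
    · exact ⟨mem_univ _, by omega⟩
  have hcard2 : ({c, d} : Finset (Fin N)).card = 2 := by
    rw [Finset.card_insert_of_notMem (by simp [hcdne]), Finset.card_singleton]
  have hsrc : (({c, d} : Finset (Fin N)) ×ˢ
      ((univ.filter fun x : Fin N => (x : ℕ) < j) \ {c, d})).card = 2 * (j - 2) := by
    rw [Finset.card_product, Finset.card_sdiff_of_subset hsub, card_filter_lt hj, hcard2]
  rw [← hsrc]
  refine (Finset.card_bij
    (fun z _ => if ((z.2 : Fin N) : ℕ) < ((z.1 : Fin N) : ℕ) then (z.2, z.1) else (z.1, z.2))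
    ?_ ?_ ?_).symm
  · -- maps into target
    rintro ⟨z, w⟩ hzw
    simp only [Finset.mem_product, mem_sdiff, mem_filter, mem_univ, true_and,
      mem_insert, mem_singleton, not_or] at hzw
    obtain ⟨hz, hwj, hwc, hwd⟩ := hzw
    have hzvals : (z : ℕ) = (c : ℕ) ∨ (z : ℕ) = (d : ℕ) := by
      rcases hz with rfl | rfl
      · exact Or.inl rfl
      · exact Or.inr rfl
    have hwcv : (w : ℕ) ≠ (c : ℕ) := fun e => hwc (Fin.ext e)
    have hwdv : (w : ℕ) ≠ (d : ℕ) := fun e => hwd (Fin.ext e)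
    have hzw' : z ≠ w := by
      intro e
      have := congrArg Fin.val e
      omega
    dsimp only
    rw [mem_filter, mem_pairs]
    refine ⟨?_, ?_, ?_⟩
    · split_ifs with hcond <;> dsimp only <;> omega
    · -- ≠ q
      intro e
      rw [show q = (c, d) from rfl] at e
      split_ifs at e with hcond <;> rw [Prod.mk.injEq] at e
      · exact hwc e.1
      · exact hwd e.2
    · -- not commute
      have hswap : Equiv.swap
          ((if (w : ℕ) < (z : ℕ) then ((w, z) : Fin N × Fin N) else (z, w)).1)
          ((if (w : ℕ) < (z : ℕ) then ((w, z) : Fin N × Fin N) else (z, w)).2)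
          = Equiv.swap z w := by
        split_ifs with hcond
        · exact Equiv.swap_comm w z
        · rfl
      rw [hswap]
      rcases hz with rfl | rfl
      · exact noncomm hzw' hcdne (fun e => hwd e)
      · rw [Equiv.swap_comm c d]
        exact noncomm hzw' (fun e => hcdne e.symm) (fun e => hwc e)
  · -- injective
    rintro ⟨z, w⟩ hzw ⟨z', w'⟩ hzw' h
    simp only [Finset.mem_product, mem_sdiff, mem_filter, mem_univ, true_and,
      mem_insert, mem_singleton, not_or] at hzw hzw'
    obtain ⟨hz, -, hwc, hwd⟩ := hzw
    obtain ⟨hz', -, hwc', hwd'⟩ := hzw'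
    dsimp only at h
    split_ifs at h <;> rw [Prod.mk.injEq] at h
    · exact Prod.ext h.2 h.1
    · exfalso; rcases hz' with rfl | rfl
      · exact hwc h.1
      · exact hwd h.1
    · exfalso; rcases hz with rfl | rfl
      · exact hwc' h.1.symm
      · exact hwd' h.1.symm
    · exact Prod.ext h.1 h.2
  · -- surjective
    rintro ⟨a, b⟩ hp
    rw [mem_filter, mem_pairs] at hp
    dsimp only at hp
    obtain ⟨⟨hab, hbj⟩, hpq, hnc⟩ := hp
    have habne : a ≠ b := fun e => by rw [e] at hab; omega
    have hshare : a = c ∨ a = d ∨ b = c ∨ b = d := by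
      by_contra hcon
      push_neg at hcon
      exact hnc (comm_of_disjoint hcon.1 hcon.2.1 hcon.2.2.1 hcon.2.2.2)
    have hpq' : ¬ (a = c ∧ b = d) := by
      intro e
      exact hpq (by rw [e.1, e.2, hc, hd])
    rcases hshare with ha | ha | hb | hb
    · -- a = c
      have hav : (a : ℕ) = (c : ℕ) := congrArg Fin.val ha
      have hbd : b ≠ d := fun e => hpq' ⟨ha, e⟩
      have hbc : b ≠ c := fun e => by have := congrArg Fin.val e; omega
      refine ⟨(c, b), ?_, ?_⟩
      · simp only [Finset.mem_product, mem_sdiff, mem_filter, mem_univ, true_and,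
          mem_insert, mem_singleton, not_or]
        exact ⟨by simp, hbj, hbc, hbd⟩
      · dsimp only
        rw [if_neg (by omega)]
        rw [ha]
    · -- a = d
      have hav : (a : ℕ) = (d : ℕ) := congrArg Fin.val ha
      have hbc : b ≠ c := fun e => by have := congrArg Fin.val e; omega
      have hbd : b ≠ d := fun e => by have := congrArg Fin.val e; omega
      refine ⟨(d, b), ?_, ?_⟩
      · simp only [Finset.mem_product, mem_sdiff, mem_filter, mem_univ, true_and,
          mem_insert, mem_singleton, not_or]
        exact ⟨by simp, hbj, hbc, hbd⟩
      · dsimp only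
        rw [if_neg (by omega)]
        rw [ha]
    · -- b = c
      have hbv : (b : ℕ) = (c : ℕ) := congrArg Fin.val hb
      have hac : a ≠ c := fun e => by have := congrArg Fin.val e; omega
      have had : a ≠ d := fun e => by have := congrArg Fin.val e; omega
      refine ⟨(c, a), ?_, ?_⟩
      · simp only [Finset.mem_product, mem_sdiff, mem_filter, mem_univ, true_and,
          mem_insert, mem_singleton, not_or]
        exact ⟨by simp, by omega, hac, had⟩
      · dsimp only
        rw [if_pos (by omega)]
        rw [hb]
    · -- b = d
      have hbv : (b : ℕ) = (d : ℕ) := congrArg Fin.val hb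
      have hac : a ≠ c := fun e => hpq' ⟨e, hb⟩
      have had : a ≠ d := fun e => by have := congrArg Fin.val e; omega
      refine ⟨(d, a), ?_, ?_⟩
      · simp only [Finset.mem_product, mem_sdiff, mem_filter, mem_univ, true_and,
          mem_insert, mem_singleton, not_or]
        exact ⟨by simp, by omega, hac, had⟩
      · dsimp only
        rw [if_pos (by omega)]
        rw [hb]

lemma inner_sum (α : ℚ) {j : ℕ} (hj : j ≤ N) {q : Fin N × Fin N} (hq : q ∈ pairs N j) :
    ∑ p ∈ pairs N j, wgt α p q = 1 + α * ((j : ℚ) - 2) := by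
  obtain ⟨hq1, hq2⟩ := mem_pairs.mp hq
  have h2j : 2 ≤ j := by omega
  rw [← Finset.sum_erase_add _ _ hq]
  have hqq : wgt α q q = 1 := by rw [wgt, if_pos rfl]
  have hrest : ∑ p ∈ (pairs N j).erase q, wgt α p q
      = α / 2 * ((2 * (j - 2) : ℕ) : ℚ) := by
    have hcongr : ∀ p ∈ (pairs N j).erase q, wgt α p q
        = if Commute (Equiv.swap p.1 p.2) (Equiv.swap q.1 q.2) then 0 else α / 2 := by
      intro p hp
      obtain ⟨hpq, hpmem⟩ := Finset.mem_erase.mp hp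
      obtain ⟨hp1, hp2⟩ := mem_pairs.mp hpmem
      rw [wgt, if_neg]
      intro e
      obtain ⟨e1, e2⟩ := swap_inj hp1 hq1 e
      exact hpq (Prod.ext e1 e2)
    rw [Finset.sum_congr rfl hcongr, Finset.sum_ite, Finset.sum_const_zero,
      Finset.sum_const, zero_add, nsmul_eq_mul]
    have hset : ((pairs N j).erase q).filter
        (fun p => ¬ Commute (Equiv.swap p.1 p.2) (Equiv.swap q.1 q.2))
        = (pairs N j).filter fun p =>
          p ≠ q ∧ ¬ Commute (Equiv.swap p.1 p.2) (Equiv.swap q.1 q.2) := by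
      ext p
      simp only [mem_filter, Finset.mem_erase]
      tauto
    rw [hset, card_noncomm hj hq]
    ring
  rw [hqq, hrest]
  have hcast : ((2 * (j - 2) : ℕ) : ℚ) = 2 * ((j : ℚ) - 2) := by
    push_cast [Nat.cast_sub h2j]
    ring
  rw [hcast]; ring

lemma sum_sum (α : ℚ) {k j : ℕ} (hkj : k ≤ j) (hj : j ≤ N) :
    ∑ p ∈ pairs N j, ∑ q ∈ pairs N k, wgt α p q
      = ((pairs N k).card : ℚ) * (1 + α * ((j : ℚ) - 2)) := by
  rw [Finset.sum_comm]
  rw [Finset.sum_congr rfl (fun q hq => ?_), Finset.sum_const, nsmul_eq_mul]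
  exact inner_sum α hj (pairs_mono hkj hq)

end CCAmAux

open CCAmAux in
open scoped Classical in
/-- the coset axis `x_m = id_{Sym(m+1)} - id_{Sym(m)}` in the Matsuo
algebra of the Weyl group of `A_n` (i.e. `Sym(n+1)` on its transpositions) has central
charge `m(2+α(m-3))/(4(1+α(m-1))(1+α(m-2)))`; at `α = 1/4` this equals
`1 - 6/((m+2)(m+3)) = m(m+5)/((m+2)(m+3))`. -/
theorem cc_Am_coset_axis
    {A : Type*} [NonUnitalNonAssocCommRing A]
    [Module ℚ A] [SMulCommClass ℚ A A] [IsScalarTower ℚ A A]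
    (n m : ℕ) (hm : 1 ≤ m) (hmn : m ≤ n)
    (α : ℚ) (hα0 : α ≠ 0) (hα1 : α ≠ 1) (ρ : Equiv.Perm (Fin (n+1)) → A)
    (B : A →ₗ[ℚ] A →ₗ[ℚ] ℚ)
    (hB : ∀ c d : Perm (Fin (n+1)), c.IsSwap → d.IsSwap →
      B (ρ c) (ρ d) = if c = d then 1 else if Commute c d then 0 else α / 2)
    (hdenE : 1 + α * ((m : ℚ) - 1) ≠ 0) (hdenF : 1 + α * ((m : ℚ) - 2) ≠ 0)
    (E F : Finset (Perm (Fin (n+1))))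
    (hE : E = univ.filter fun g : Perm (Fin (n+1)) =>
      g.IsSwap ∧ ∀ x : Fin (n+1), m + 1 ≤ (x : ℕ) → g x = x)
    (hF : F = univ.filter fun g : Perm (Fin (n+1)) =>
      g.IsSwap ∧ ∀ x : Fin (n+1), m ≤ (x : ℕ) → g x = x)
    (x : A)
    (hx : x = (1 + α * ((m : ℚ) - 1))⁻¹ • ∑ e ∈ E, ρ e
            - (1 + α * ((m : ℚ) - 2))⁻¹ • ∑ f ∈ F, ρ f) :
    (1/2 : ℚ) * B x x
        = (m : ℚ) * (2 + α * ((m : ℚ) - 3)) /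
            (4 * (1 + α * ((m : ℚ) - 1)) * (1 + α * ((m : ℚ) - 2))) ∧
    (α = 1/4 →
      (1/2 : ℚ) * B x x = 1 - 6 / (((m : ℚ) + 2) * ((m : ℚ) + 3)) ∧
      (1/2 : ℚ) * B x x = (m : ℚ) * ((m : ℚ) + 5) / (((m : ℚ) + 2) * ((m : ℚ) + 3))) := by
  have hk1 : m + 1 ≤ n + 1 := by omega
  have hk2 : m ≤ n + 1 := by omega
  have hEmem : ∀ g : Perm (Fin (n+1)), g ∈ E ↔
      (g.IsSwap ∧ ∀ x : Fin (n+1), m + 1 ≤ (x : ℕ) → g x = x) := by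
    intro g; rw [hE, Finset.mem_filter]; simp
  have hFmem : ∀ g : Perm (Fin (n+1)), g ∈ F ↔
      (g.IsSwap ∧ ∀ x : Fin (n+1), m ≤ (x : ℕ) → g x = x) := by
    intro g; rw [hF, Finset.mem_filter]; simp
  have hSE : ∑ e ∈ E, ρ e = ∑ p ∈ pairs (n+1) (m+1), ρ (Equiv.swap p.1 p.2) :=
    sum_S hk1 E hEmem ρ
  have hSF : ∑ f ∈ F, ρ f = ∑ p ∈ pairs (n+1) m, ρ (Equiv.swap p.1 p.2) :=
    sum_S hk2 F hFmem ρ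
  have hBsum : ∀ jj kk : ℕ,
      B (∑ p ∈ pairs (n+1) jj, ρ (Equiv.swap p.1 p.2))
        (∑ q ∈ pairs (n+1) kk, ρ (Equiv.swap q.1 q.2))
      = ∑ p ∈ pairs (n+1) jj, ∑ q ∈ pairs (n+1) kk, wgt α p q := by
    intro jj kk
    rw [map_sum]
    refine Eq.trans ?_ Finset.sum_comm
    refine Finset.sum_congr rfl fun q hq => ?_
    rw [map_sum, LinearMap.sum_apply]
    refine Finset.sum_congr rfl fun p hp => ?_
    obtain ⟨hp1, -⟩ := mem_pairs.mp hp
    obtain ⟨hq1, -⟩ := mem_pairs.mp hq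
    have hpne : p.1 ≠ p.2 := fun e => by rw [e] at hp1; omega
    have hqne : q.1 ≠ q.2 := fun e => by rw [e] at hq1; omega
    rw [hB _ _ ⟨p.1, p.2, hpne, rfl⟩ ⟨q.1, q.2, hqne, rfl⟩]
    by_cases h1 : Equiv.swap p.1 p.2 = Equiv.swap q.1 q.2
    · simp [wgt, h1]
    · by_cases h2 : Commute (Equiv.swap p.1 p.2) (Equiv.swap q.1 q.2)
      · simp [wgt, h1, h2]
      · simp [wgt, h1, h2]
  -- cardinalities
  have hcE : 2 * (pairs (n+1) (m+1)).card = (m+1) * m := by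
    have h := card_pairs hk1
    rwa [Nat.add_sub_cancel] at h
  have hcF : 2 * (pairs (n+1) m).card = m * (m - 1) := card_pairs hk2
  have hcEQ : (((pairs (n+1) (m+1)).card : ℕ) : ℚ) = ((m : ℚ) + 1) * m / 2 := by
    have h2 : ((2 * (pairs (n+1) (m+1)).card : ℕ) : ℚ) = (((m+1) * m : ℕ) : ℚ) := by
      rw [hcE]
    push_cast at h2
    linarith
  have hcFQ : (((pairs (n+1) m).card : ℕ) : ℚ) = (m : ℚ) * ((m : ℚ) - 1) / 2 := by
    have h2 : ((2 * (pairs (n+1) m).card : ℕ) : ℚ) = ((m * (m - 1) : ℕ) : ℚ) := by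
      rw [hcF]
    push_cast [Nat.cast_sub hm] at h2
    linarith
  -- the four double sums
  have hS11 : ∑ p ∈ pairs (n+1) (m+1), ∑ q ∈ pairs (n+1) (m+1), wgt α p q
      = (((m : ℚ) + 1) * m / 2) * (1 + α * ((m : ℚ) - 1)) := by
    rw [sum_sum α le_rfl hk1, hcEQ]
    push_cast
    ring
  have hS12 : ∑ p ∈ pairs (n+1) (m+1), ∑ q ∈ pairs (n+1) m, wgt α p q
      = ((m : ℚ) * ((m : ℚ) - 1) / 2) * (1 + α * ((m : ℚ) - 1)) := by
    rw [sum_sum α (by omega) hk1, hcFQ]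
    push_cast
    ring
  have hS21 : ∑ p ∈ pairs (n+1) m, ∑ q ∈ pairs (n+1) (m+1), wgt α p q
      = ((m : ℚ) * ((m : ℚ) - 1) / 2) * (1 + α * ((m : ℚ) - 1)) := by
    rw [Finset.sum_congr rfl
      (fun p _ => Finset.sum_congr rfl (fun q _ => wgt_symm α p q)), Finset.sum_comm]
    rw [sum_sum α (by omega) hk1, hcFQ]
    push_cast
    ring
  have hS22 : ∑ p ∈ pairs (n+1) m, ∑ q ∈ pairs (n+1) m, wgt α p q
      = ((m : ℚ) * ((m : ℚ) - 1) / 2) * (1 + α * ((m : ℚ) - 2)) := by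
    rw [sum_sum α le_rfl hk2, hcFQ]
  have h1 : (1/2 : ℚ) * B x x
      = (m : ℚ) * (2 + α * ((m : ℚ) - 3)) /
          (4 * (1 + α * ((m : ℚ) - 1)) * (1 + α * ((m : ℚ) - 2))) := by
    rw [hx, hSE, hSF]
    simp only [map_sub, map_smul, LinearMap.sub_apply, LinearMap.smul_apply, smul_eq_mul]
    rw [hBsum (m+1) (m+1), hBsum (m+1) m, hBsum m (m+1), hBsum m m,
      hS11, hS12, hS21, hS22]
    field_simp
    ring
  refine ⟨h1, fun hα => ?_⟩
  subst hα
  have hm2 : ((m : ℚ) + 2) ≠ 0 := by positivity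
  have hm3 : ((m : ℚ) + 3) ≠ 0 := by positivity
  have h6 : (6 + (m : ℚ) * 5 + (m : ℚ) ^ 2) ≠ 0 := by positivity
  have h6' : ((m : ℚ) ^ 2 + 5 * m + 6) ≠ 0 := by positivity
  have e : (6 + (m : ℚ) * 5 + (m : ℚ) ^ 2)⁻¹ * (6 + (m : ℚ) * 5 + (m : ℚ) ^ 2) = 1 :=
    inv_mul_cancel₀ h6
  constructor
  · rw [h1]
    field_simp [h6, h6']
    linear_combination ((m : ℚ) * 5 + (m : ℚ) ^ 2) * e
  · rw [h1]
    field_simp [h6, h6']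
    linear_combination ((m : ℚ) + 5) * e
end

section
/- In the extended Matsuo algebra \hat{A}^α_3(G,D) of a k-regular 3-transposition group, for any d ∈ D: d^ρ_- · id_A = (α/(2+αk))·(k·d^ρ_- + Σ_{c∈N_D(d)}(c^ρ_+ - c^ρ_-)), where id_A = (1+αk/2)^{-1}Σ_{c∈D}c^ρ_+. -/
open Finset

open scoped Classical in
/-- in the extended Matsuo algebra `Â^α_3(G,D)` of a `k`-regular
3-transposition group (basis `d^ρ_± = ρ true d, ρ false d`), for any `d ∈ D`,
`d^ρ_- · id_A = (α/(2+αk)) (k d^ρ_- + Σ_{c ∈ N_D(d)} (c^ρ_+ - c^ρ_-))`,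
where `id_A = (1+αk/2)⁻¹ Σ_{c ∈ D} c^ρ_+`. -/
theorem extended_matsuo_minus_mul_id {G A : Type*} [Group G]
    [NonUnitalNonAssocCommRing A] [Module ℚ A] [SMulCommClass ℚ A A] [IsScalarTower ℚ A A]
    (D : Finset G) (α : ℚ) (hα0 : α ≠ 0) (hα1 : α ≠ 1) (ρ : Bool → G → A)
    (hinv : ∀ d ∈ D, d * d = 1) (hne1 : ∀ d ∈ D, d ≠ 1)
    (hnorm : ∀ c ∈ D, ∀ g : G, g⁻¹ * c * g ∈ D)
    (h3trans : ∀ c ∈ D, ∀ d ∈ D, orderOf (c * d) ≤ 3)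
    (hmul_self : ∀ d ∈ D, ∀ ε : Bool, ρ ε d * ρ ε d = ρ ε d)
    (hmul_comm : ∀ c ∈ D, ∀ d ∈ D, ∀ ε ε' : Bool, ¬ (c = d ∧ ε = ε') → Commute c d →
      ρ ε c * ρ ε' d = 0)
    (hmul_ncomm : ∀ c ∈ D, ∀ d ∈ D, ∀ ε ε' : Bool, ¬ Commute c d →
      ρ ε c * ρ ε' d = (α/2) • (ρ ε c + ρ ε' d - ρ (ε == ε') (d⁻¹ * c * d)))
    (k : ℕ) (hreg : ∀ d ∈ D, (D.filter fun c => ¬ Commute c d).card = k)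
    (hden : 2 + α * k ≠ 0)
    (d : G) (hd : d ∈ D) :
    ρ false d * ((1 + α * k / 2)⁻¹ • ∑ c ∈ D, ρ true c)
      = (α / (2 + α * k)) •
          ((k : ℚ) • ρ false d
            + ∑ c ∈ D.filter (fun c => ¬ Commute c d), (ρ true c - ρ false c)) := by
  classical
  have hd2 : d * d = 1 := hinv d hd
  have hdd : d⁻¹ = d := inv_eq_of_mul_eq_one_right hd2
  have hα2 : (α/2 : ℚ) ≠ 0 := div_ne_zero hα0 two_ne_zero
  -- conjugate equality in A
  have hconj : ∀ c ∈ D, ¬ Commute c d → ρ false (c⁻¹ * d * c) = ρ false (d⁻¹ * c * d) := by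
    intro c hc hnc
    have h1 := hmul_ncomm d hd c hc false true (fun h => hnc h.symm)
    have h2 := hmul_ncomm c hc d hd true false hnc
    simp only [show (false == true) = false from rfl, show (true == false) = false from rfl]
      at h1 h2
    have e : (α/2) • (ρ false d + ρ true c - ρ false (c⁻¹ * d * c))
        = (α/2) • (ρ false d + ρ true c - ρ false (d⁻¹ * c * d)) := by
      rw [← h1, mul_comm, h2, add_comm (ρ true c)]
    have e2 := congrArg (fun x => (α/2 : ℚ)⁻¹ • x) e
    simp only [inv_smul_smul₀ hα2] at e2
    exact sub_right_injective e2
  have hψ : ∀ c ∈ D.filter (fun c => ¬ Commute c d),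
      d⁻¹ * c * d ∈ D.filter (fun c => ¬ Commute c d) := by
    intro c hc
    simp only [Finset.mem_filter] at hc ⊢
    refine ⟨hnorm c hc.1 d, fun h => hc.2 ?_⟩
    have e := h.eq
    rw [hdd] at e
    rw [mul_assoc (d*c) d d, hd2, mul_one, ← mul_assoc d (d*c) d, ← mul_assoc d d c,
      hd2, one_mul] at e
    exact e.symm
  have hinvol : ∀ c ∈ D.filter (fun c => ¬ Commute c d), d⁻¹ * (d⁻¹ * c * d) * d = c := by
    intro c _
    rw [hdd, ← mul_assoc d (d*c) d, mul_assoc (d * (d*c)) d d, hd2, mul_one,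
      ← mul_assoc d d c, hd2, one_mul]
  have hbij : ∑ c ∈ D.filter (fun c => ¬ Commute c d), ρ false (c⁻¹ * d * c)
      = ∑ c ∈ D.filter (fun c => ¬ Commute c d), ρ false c := by
    rw [Finset.sum_congr rfl (fun c hc => by
      simp only [Finset.mem_filter] at hc
      exact hconj c hc.1 hc.2)]
    exact Finset.sum_nbij' (i := fun c => d⁻¹ * c * d) (j := fun c => d⁻¹ * c * d)
      hψ hψ hinvol hinvol (fun c _ => rfl)
  have hzero : ∑ c ∈ D.filter (fun c => ¬ ¬ Commute c d), ρ false d * ρ true c = 0 := by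
    refine Finset.sum_eq_zero fun c hc => ?_
    simp only [Finset.mem_filter, not_not] at hc
    exact hmul_comm d hd c hc.1 false true (by simp) hc.2.symm
  have hk := hreg d hd
  have hNsum : ∑ c ∈ D.filter (fun c => ¬ Commute c d), ρ false d * ρ true c
      = (α/2) • ((k : ℚ) • ρ false d
          + ∑ c ∈ D.filter (fun c => ¬ Commute c d), (ρ true c - ρ false c)) := by
    rw [Finset.sum_congr rfl (fun c hc => by
      simp only [Finset.mem_filter] at hc
      exact hmul_ncomm d hd c hc.1 false true (fun h => hc.2 h.symm))]
    simp only [show (false == true) = false from rfl]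
    rw [← Finset.smul_sum]
    congr 1
    rw [Finset.sum_sub_distrib, Finset.sum_add_distrib, Finset.sum_const, hbij, hk,
      Finset.sum_sub_distrib, Nat.cast_smul_eq_nsmul]
    abel
  rw [mul_smul_comm, Finset.mul_sum,
    ← Finset.sum_filter_add_sum_filter_not D (fun c => ¬ Commute c d), hzero, add_zero,
    hNsum, smul_smul]
  congr 1
  have h1 : (1 + α * k / 2 : ℚ) ≠ 0 := by
    intro h; apply hden; linarith
  field_simp
end

section
/- Let a,b,c,d be transpositions in D = D(A_{m-1}) ⊂ Sym(m) such that {a,b} and {c,d} are commuting pairs (⟨a,b⟩ ≅ ⟨c,d⟩ ≅ C₂×C₂) with equal 4-element support. Then v = α(a^ρ_+ + b^ρ_+ - c^ρ_+ - d^ρ_+) + (1-α)(a^ρ_- + b^ρ_- - c^ρ_- - d^ρ_-) is an eigenvector of ad(id_A) with eigenvalue \hat{η}(m) = α(m-1)/(1+α(m-2)) in \hat{A}^α_3(A_{m-1}). -/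
open Finset Equiv

section MatsuoAux

open scoped Classical

variable {m : ℕ}

private lemma aux_swap_eq_of_mem_support {g : Perm (Fin m)} (hg : g.IsSwap)
    {p : Fin m} (hp : p ∈ g.support) : g = Equiv.swap p (g p) := by
  obtain ⟨x, y, hxy, rfl⟩ := hg
  rw [Equiv.Perm.support_swap hxy] at hp
  simp only [Finset.mem_insert, Finset.mem_singleton] at hp
  rcases hp with rfl | rfl
  · rw [Equiv.swap_apply_left]
  · rw [Equiv.swap_apply_right, Equiv.swap_comm]

private lemma aux_swap_eq_of_support_eq {g h : Perm (Fin m)} (hg : g.IsSwap) (hh : h.IsSwap)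
    (hs : g.support = h.support) : g = h := by
  obtain ⟨x, y, hxy, rfl⟩ := hg
  obtain ⟨u, v, huv, rfl⟩ := hh
  rw [Equiv.Perm.support_swap hxy, Equiv.Perm.support_swap huv] at hs
  have hx : x = u ∨ x = v := by
    have : x ∈ ({u, v} : Finset (Fin m)) := hs ▸ (by simp)
    simpa using this
  have hy : y = u ∨ y = v := by
    have : y ∈ ({u, v} : Finset (Fin m)) := hs ▸ (by simp)
    simpa using this
  rcases hx with rfl | rfl <;> rcases hy with rfl | rfl
  · exact absurd rfl hxy
  · rfl
  · exact Equiv.swap_comm _ _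
  · exact absurd rfl hxy

private lemma aux_commute_iff_conj {G : Type*} [Group G] (g a : G) :
    Commute g a ↔ a⁻¹ * g * a = g := by
  constructor
  · intro h
    rw [mul_assoc, h.eq, inv_mul_cancel_left]
  · intro h
    have h2 : a * (a⁻¹ * g * a) = a * g := by rw [h]
    rw [← mul_assoc, ← mul_assoc, mul_inv_cancel, one_mul] at h2
    exact h2

private lemma aux_commute_conj_iff {G : Type*} [Group G] (g a : G) :
    Commute (a⁻¹ * g * a) a ↔ Commute g a := by
  have hinj : Function.Injective fun x : G => a⁻¹ * x * a := by
    intro u v h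
    simpa [mul_assoc] using congrArg (fun x => a * x * a⁻¹) h
  rw [aux_commute_iff_conj, aux_commute_iff_conj g a]
  constructor
  · intro h
    exact hinj h
  · intro h
    show a⁻¹ * (a⁻¹ * g * a) * a = a⁻¹ * g * a
    rw [show a⁻¹ * g * a = g from h]
    exact h

private lemma aux_isSwap_conj {g a : Perm (Fin m)} (hg : g.IsSwap) :
    (a⁻¹ * g * a).IsSwap := by
  obtain ⟨x, y, hxy, rfl⟩ := hg
  refine ⟨a⁻¹ x, a⁻¹ y, fun h => hxy (a⁻¹.injective h), ?_⟩
  rw [Equiv.swap_apply_apply]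
  simp [mul_assoc]


private lemma aux_swap_commute_iff {g a : Perm (Fin m)} (hg : g.IsSwap) (ha : a.IsSwap) :
    Commute g a ↔ g = a ∨ Disjoint g.support a.support := by
  constructor
  · intro hcomm
    by_contra hcon
    push_neg at hcon
    obtain ⟨hne, hnd⟩ := hcon
    obtain ⟨p, hpg, hpa⟩ := Finset.not_disjoint_iff.mp hnd
    have hgp : g = Equiv.swap p (g p) := aux_swap_eq_of_mem_support hg hpg
    have hap : a = Equiv.swap p (a p) := aux_swap_eq_of_mem_support ha hpa
    have hq : g p ≠ p := Equiv.Perm.mem_support.mp hpg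
    have hr : a p ≠ p := Equiv.Perm.mem_support.mp hpa
    have hqr : g p ≠ a p := by
      intro h
      exact hne (by rw [hgp, h, ← hap])
    -- evaluate commutation at q = g p
    have heval := congrArg (fun σ : Perm (Fin m) => σ (g p)) hcomm.eq
    simp only [Equiv.Perm.mul_apply] at heval
    -- a (g p) = g p since  g p ∉ {p, a p} = support a
    have haq : a (g p) = g p := by
      conv_lhs => rw [hap]
      exact Equiv.swap_apply_of_ne_of_ne hq hqr
    have hgq : g (g p) = p := by
      nth_rewrite 1 [hgp]
      exact Equiv.swap_apply_right _ _
    rw [haq, hgq] at heval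
    exact hr heval.symm
  · rintro (rfl | hdisj)
    · exact Commute.refl g
    · exact (Equiv.Perm.disjoint_iff_disjoint_support.mpr hdisj).commute


private lemma aux_card_noncomm {a : Perm (Fin m)} (ha : a.IsSwap) :
    (univ.filter (fun g : Perm (Fin m) => g.IsSwap ∧ ¬ Commute g a)).card = 2 * (m - 2) := by
  obtain ⟨x, y, hxy, rfl⟩ := ha
  set s : Finset (Fin m) := univ \ {x, y} with hs
  have hmem : ∀ k ∈ s, k ≠ x ∧ k ≠ y := by
    intro k hk
    simp only [hs, Finset.mem_sdiff, Finset.mem_univ, true_and, Finset.mem_insert,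
      Finset.mem_singleton, not_or] at hk
    exact hk
  have hncomm : ∀ (u k : Fin m), u ≠ k → ({u, k} : Finset (Fin m)) ∩ ({x, y} : Finset (Fin m)) ≠ ∅ →
      Equiv.swap u k ≠ Equiv.swap x y → ¬ Commute (Equiv.swap u k) (Equiv.swap x y) := by
    intro u k huk hint hne hcomm
    rcases (aux_swap_commute_iff ⟨u, k, huk, rfl⟩ ⟨x, y, hxy, rfl⟩).mp hcomm with h | h
    · exact hne h
    · rw [Equiv.Perm.support_swap huk, Equiv.Perm.support_swap hxy] at h
      exact hint (Finset.disjoint_iff_inter_eq_empty.mp h)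
  have key : univ.filter (fun g : Perm (Fin m) => g.IsSwap ∧ ¬ Commute g (Equiv.swap x y))
      = s.image (fun k => Equiv.swap x k) ∪ s.image (fun k => Equiv.swap y k) := by
    ext g
    simp only [Finset.mem_filter, Finset.mem_univ, true_and, Finset.mem_union, Finset.mem_image]
    constructor
    · rintro ⟨hg, hcomm⟩
      have hne : g ≠ Equiv.swap x y := fun h => hcomm (h ▸ Commute.refl _)
      have hnd : ¬ Disjoint g.support (Equiv.swap x y).support := by
        intro h
        rcases (aux_swap_commute_iff hg ⟨x, y, hxy, rfl⟩).mpr (Or.inr h) with h'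
        exact hcomm h'
      obtain ⟨p, hpg, hpa⟩ := Finset.not_disjoint_iff.mp hnd
      rw [Equiv.Perm.support_swap hxy] at hpa
      simp only [Finset.mem_insert, Finset.mem_singleton] at hpa
      have hgp := aux_swap_eq_of_mem_support hg hpg
      have hq : g p ≠ p := Equiv.Perm.mem_support.mp hpg
      rcases hpa with rfl | rfl
      · left
        refine ⟨g p, ?_, hgp.symm⟩
        simp only [hs, Finset.mem_sdiff, Finset.mem_univ, true_and, Finset.mem_insert,
          Finset.mem_singleton, not_or]
        refine ⟨hq, fun h => hne ?_⟩
        rw [hgp, h]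
      · right
        refine ⟨g p, ?_, hgp.symm⟩
        simp only [hs, Finset.mem_sdiff, Finset.mem_univ, true_and, Finset.mem_insert,
          Finset.mem_singleton, not_or]
        refine ⟨fun h => hne ?_, hq⟩
        rw [hgp, h, Equiv.swap_comm]
    · rintro (⟨k, hk, rfl⟩ | ⟨k, hk, rfl⟩)
      · obtain ⟨hkx, hky⟩ := hmem k hk
        refine ⟨⟨x, k, Ne.symm hkx, rfl⟩, hncomm x k (Ne.symm hkx) ?_ ?_⟩
        · intro h
          have : x ∈ ({x, k} : Finset (Fin m)) ∩ ({x, y} : Finset (Fin m)) := by simp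
          rw [h] at this
          exact absurd this (Finset.notMem_empty x)
        · intro h
          have := congrArg (fun σ : Perm (Fin m) => σ x) h
          simp only [Equiv.swap_apply_left] at this
          exact hky this
      · obtain ⟨hkx, hky⟩ := hmem k hk
        refine ⟨⟨y, k, Ne.symm hky, rfl⟩, hncomm y k (Ne.symm hky) ?_ ?_⟩
        · intro h
          have : y ∈ ({y, k} : Finset (Fin m)) ∩ ({x, y} : Finset (Fin m)) := by simp
          rw [h] at this
          exact absurd this (Finset.notMem_empty y)
        · intro h
          have := congrArg (fun σ : Perm (Fin m) => σ y) h
          simp only [Equiv.swap_apply_left] at this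
          rw [Equiv.swap_apply_right] at this
          exact hkx this
  have hsdcard : s.card = m - 2 := by
    rw [hs, Finset.card_sdiff_of_subset (Finset.subset_univ _), Finset.card_univ, Fintype.card_fin,
      Finset.card_pair hxy]
  have hinjx : Set.InjOn (fun k => Equiv.swap x k) s := by
    intro k hk k' hk' h
    have := congrArg (fun σ : Perm (Fin m) => σ x) h
    simp only [Equiv.swap_apply_left] at this
    exact this
  have hinjy : Set.InjOn (fun k => Equiv.swap y k) s := by
    intro k hk k' hk' h
    have := congrArg (fun σ : Perm (Fin m) => σ y) h
    simp only [Equiv.swap_apply_left] at this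
    exact this
  have hdisj : Disjoint (s.image (fun k => Equiv.swap x k)) (s.image (fun k => Equiv.swap y k)) := by
    rw [Finset.disjoint_left]
    intro g hg1 hg2
    rw [Finset.mem_image] at hg1 hg2
    obtain ⟨k, hk, rfl⟩ := hg1
    obtain ⟨k', hk', h⟩ := hg2
    obtain ⟨hkx, hky⟩ := hmem k hk
    obtain ⟨hk'x, hk'y⟩ := hmem k' hk'
    have := congrArg (fun σ : Perm (Fin m) => σ x) h
    simp only [Equiv.swap_apply_left] at this
    rw [Equiv.swap_apply_of_ne_of_ne hxy (Ne.symm hk'x)] at this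
    exact hkx this.symm
  rw [key, Finset.card_union_of_disjoint hdisj, Finset.card_image_of_injOn hinjx,
    Finset.card_image_of_injOn hinjy, hsdcard]
  omega


private lemma aux_coef {g x : Perm (Fin m)} (hg : g.IsSwap) (hx : x.IsSwap) :
    (if ¬ Commute g x then (1 : ℚ) else 0) + (if g = x then (2 : ℚ) else 0)
      = ((g.support ∩ x.support).card : ℚ) := by
  have hcg : g.support.card = 2 := Equiv.Perm.card_support_eq_two.mpr hg
  have hcx : x.support.card = 2 := Equiv.Perm.card_support_eq_two.mpr hx
  by_cases hgx : g = x
  · subst hgx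
    rw [if_neg (by simp [Commute.refl]), Finset.inter_self, hcg]
    norm_num
  · rw [if_neg hgx]
    by_cases hcom : Commute g x
    · rcases (aux_swap_commute_iff hg hx).mp hcom with h | h
      · exact absurd h hgx
      · rw [if_neg (by simpa using hcom), Finset.disjoint_iff_inter_eq_empty.mp h]
        simp
    · rw [if_pos hcom]
      have hnd : ¬ Disjoint g.support x.support := by
        intro h
        exact hcom ((aux_swap_commute_iff hg hx).mpr (Or.inr h))
      have h0 : (g.support ∩ x.support).Nonempty := Finset.not_disjoint_iff_nonempty_inter.mp hnd
      have hle : (g.support ∩ x.support).card ≤ 2 :=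
        hcg ▸ Finset.card_le_card (Finset.inter_subset_left)
      have hne2 : (g.support ∩ x.support).card ≠ 2 := by
        intro h2
        have h3 : g.support ∩ x.support = g.support :=
          Finset.eq_of_subset_of_card_le Finset.inter_subset_left (by omega)
        have h4 : g.support ⊆ x.support := h3 ▸ Finset.inter_subset_right
        have h5 : g.support = x.support :=
          Finset.eq_of_subset_of_card_le h4 (by omega)
        exact hgx (aux_swap_eq_of_support_eq hg hx h5)
      have h1 : (g.support ∩ x.support).card = 1 := by
        have := Finset.card_pos.mpr h0
        omega
      rw [h1]
      norm_num


private lemma aux_key_sum {A : Type*} [NonUnitalNonAssocCommRing A]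
    [Module ℚ A] [SMulCommClass ℚ A A] [IsScalarTower ℚ A A]
    (hm : 2 ≤ m) (α : ℚ)
    (ρ : Bool → Equiv.Perm (Fin m) → A)
    (hmul_self : ∀ g : Perm (Fin m), g.IsSwap → ∀ ε : Bool, ρ ε g * ρ ε g = ρ ε g)
    (hmul_comm : ∀ g h : Perm (Fin m), g.IsSwap → h.IsSwap → ∀ ε ε' : Bool,
      ¬ (g = h ∧ ε = ε') → Commute g h → ρ ε g * ρ ε' h = 0)
    (hmul_ncomm : ∀ g h : Perm (Fin m), g.IsSwap → h.IsSwap → ∀ ε ε' : Bool,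
      ¬ Commute g h →
      ρ ε g * ρ ε' h = (α/2) • (ρ ε g + ρ ε' h - ρ (ε == ε') (h⁻¹ * g * h)))
    (x : Perm (Fin m)) (hx : x.IsSwap) (ε : Bool) :
    ∑ g ∈ univ.filter (fun g : Perm (Fin m) => g.IsSwap), ρ true g * ρ ε x
      = (if ε = true then ρ true x else 0)
        + (α * ((m : ℚ) - 2)) • ρ ε x
        + (α / 2) •
          ((∑ g ∈ univ.filter (fun g : Perm (Fin m) => g.IsSwap ∧ ¬ Commute g x), ρ true g)
            - ∑ g ∈ univ.filter (fun g : Perm (Fin m) => g.IsSwap ∧ ¬ Commute g x), ρ ε g) := by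
  have hsplit := Finset.sum_filter_add_sum_filter_not
    (univ.filter (fun g : Perm (Fin m) => g.IsSwap)) (fun g => Commute g x)
    (fun g => ρ true g * ρ ε x)
  rw [Finset.filter_filter, Finset.filter_filter] at hsplit
  rw [← hsplit]
  -- commuting part
  have h1 : ∑ g ∈ univ.filter (fun g : Perm (Fin m) => g.IsSwap ∧ Commute g x),
      ρ true g * ρ ε x = (if ε = true then ρ true x else 0) := by
    have hcong : ∀ g ∈ univ.filter (fun g : Perm (Fin m) => g.IsSwap ∧ Commute g x),
        ρ true g * ρ ε x = (if g = x then (if ε = true then ρ true x else 0) else 0) := by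
      intro g hg
      rw [Finset.mem_filter] at hg
      obtain ⟨-, hgs, hgc⟩ := hg
      by_cases hgx : g = x
      · subst hgx
        by_cases hε : ε = true
        · subst hε
          rw [if_pos rfl, if_pos rfl]
          exact hmul_self g hgs true
        · rw [if_pos rfl, if_neg hε]
          exact hmul_comm g g hgs hgs true ε (by tauto) hgc
      · rw [if_neg hgx]
        exact hmul_comm g x hgs hx true ε (by tauto) hgc
    rw [Finset.sum_congr rfl hcong, Finset.sum_ite_eq' _ x
      (fun _ => (if ε = true then ρ true x else 0))]
    rw [if_pos (by simp [Finset.mem_filter, hx, Commute.refl])]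
  -- noncommuting part
  have hNcard := aux_card_noncomm hx
  have h2 : ∑ g ∈ univ.filter (fun g : Perm (Fin m) => g.IsSwap ∧ ¬ Commute g x),
      ρ true g * ρ ε x
      = (α / 2) •
        ((∑ g ∈ univ.filter (fun g : Perm (Fin m) => g.IsSwap ∧ ¬ Commute g x), ρ true g)
          + (2 * ((m : ℚ) - 2)) • ρ ε x
          - ∑ g ∈ univ.filter (fun g : Perm (Fin m) => g.IsSwap ∧ ¬ Commute g x), ρ ε g) := by
    have hcong : ∀ g ∈ univ.filter (fun g : Perm (Fin m) => g.IsSwap ∧ ¬ Commute g x),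
        ρ true g * ρ ε x = (α / 2) • (ρ true g + ρ ε x - ρ ε (x⁻¹ * g * x)) := by
      intro g hg
      rw [Finset.mem_filter] at hg
      obtain ⟨-, hgs, hgc⟩ := hg
      have := hmul_ncomm g x hgs hx true ε hgc
      simpa using this
    rw [Finset.sum_congr rfl hcong, ← Finset.smul_sum]
    congr 1
    rw [Finset.sum_sub_distrib, Finset.sum_add_distrib, Finset.sum_const]
    have hconjsum : ∑ g ∈ univ.filter (fun g : Perm (Fin m) => g.IsSwap ∧ ¬ Commute g x),
        ρ ε (x⁻¹ * g * x)
        = ∑ g ∈ univ.filter (fun g : Perm (Fin m) => g.IsSwap ∧ ¬ Commute g x), ρ ε g := by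
      refine Finset.sum_nbij' (i := fun g => x⁻¹ * g * x) (j := fun g => x * g * x⁻¹)
        ?_ ?_ ?_ ?_ ?_
      · intro g hg
        rw [Finset.mem_filter] at hg ⊢
        exact ⟨Finset.mem_univ _, aux_isSwap_conj hg.2.1,
          fun h => hg.2.2 ((aux_commute_conj_iff g x).mp h)⟩
      · intro g hg
        rw [Finset.mem_filter] at hg ⊢
        refine ⟨Finset.mem_univ _, ?_, ?_⟩
        · have := aux_isSwap_conj (a := x⁻¹) hg.2.1
          simpa using this
        · intro h
          apply hg.2.2
          have : x⁻¹ * (x * g * x⁻¹) * x = g := by group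
          rw [← this]
          exact (aux_commute_conj_iff (x * g * x⁻¹) x).mpr h
      · intro g _; group
      · intro g _; group
      · intro g _; rfl
    rw [hconjsum]
    have hcast : ((univ.filter (fun g : Perm (Fin m) => g.IsSwap ∧ ¬ Commute g x)).card : ℚ)
        = 2 * ((m : ℚ) - 2) := by
      rw [hNcard]
      have : ((2 * (m - 2) : ℕ) : ℚ) = 2 * ((m : ℚ) - 2) := by
        push_cast [Nat.cast_sub hm]
        ring
      exact this
    rw [← hcast, Nat.cast_smul_eq_nsmul]
  rw [h1, h2]
  module

end MatsuoAux


open scoped Classical in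
/-- in the extended Matsuo algebra `Â^α_3(A_{m-1})` (on the transpositions
of `Sym(m)`), if `{a,b}` and `{c,d}` are commuting pairs of transpositions with equal
4-element support, then
`v = α(a₊+b₊-c₊-d₊) + (1-α)(a₋+b₋-c₋-d₋)` is an eigenvector of `ad(id_A)` with
eigenvalue `η̂(m) = α(m-1)/(1+α(m-2))`. -/
theorem extended_matsuo_hat_eigenvector
    {A : Type*} [NonUnitalNonAssocCommRing A]
    [Module ℚ A] [SMulCommClass ℚ A A] [IsScalarTower ℚ A A]
    (m : ℕ) (α : ℚ) (hα0 : α ≠ 0) (hα1 : α ≠ 1)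
    (ρ : Bool → Equiv.Perm (Fin m) → A)
    (hmul_self : ∀ g : Perm (Fin m), g.IsSwap → ∀ ε : Bool, ρ ε g * ρ ε g = ρ ε g)
    (hmul_comm : ∀ g h : Perm (Fin m), g.IsSwap → h.IsSwap → ∀ ε ε' : Bool,
      ¬ (g = h ∧ ε = ε') → Commute g h → ρ ε g * ρ ε' h = 0)
    (hmul_ncomm : ∀ g h : Perm (Fin m), g.IsSwap → h.IsSwap → ∀ ε ε' : Bool,
      ¬ Commute g h →
      ρ ε g * ρ ε' h = (α/2) • (ρ ε g + ρ ε' h - ρ (ε == ε') (h⁻¹ * g * h)))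
    (hden : 1 + α * ((m : ℚ) - 2) ≠ 0)
    (idA : A)
    (hidA : idA = (1 + α * ((m : ℚ) - 2))⁻¹ •
      ∑ g ∈ univ.filter (fun g : Perm (Fin m) => g.IsSwap), ρ true g)
    (a b c d : Perm (Fin m))
    (ha : a.IsSwap) (hb : b.IsSwap) (hc : c.IsSwap) (hd : d.IsSwap)
    (hab : a ≠ b) (habc : Commute a b) (hcd : c ≠ d) (hcdc : Commute c d)
    (hsupp : a.support ∪ b.support = c.support ∪ d.support)
    (hsupp4 : (a.support ∪ b.support).card = 4)
    (v : A)
    (hv : v = α • (ρ true a + ρ true b - ρ true c - ρ true d)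
            + (1 - α) • (ρ false a + ρ false b - ρ false c - ρ false d)) :
    idA * v = (α * ((m : ℚ) - 1) / (1 + α * ((m : ℚ) - 2))) • v := by
  have hm4 : 4 ≤ m := by
    calc 4 = (a.support ∪ b.support).card := hsupp4.symm
    _ ≤ (univ : Finset (Fin m)).card := Finset.card_le_card (Finset.subset_univ _)
    _ = m := by simp
  have hm2 : 2 ≤ m := by omega
  have hdab : Disjoint a.support b.support := by
    have h := Finset.card_union_add_card_inter a.support b.support
    rw [hsupp4, Equiv.Perm.card_support_eq_two.mpr ha, Equiv.Perm.card_support_eq_two.mpr hb] at h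
    have h0 : (a.support ∩ b.support).card = 0 := by omega
    rw [Finset.card_eq_zero] at h0
    exact Finset.disjoint_iff_inter_eq_empty.mpr h0
  have hdcd : Disjoint c.support d.support := by
    have h := Finset.card_union_add_card_inter c.support d.support
    rw [← hsupp, hsupp4, Equiv.Perm.card_support_eq_two.mpr hc,
      Equiv.Perm.card_support_eq_two.mpr hd] at h
    have h0 : (c.support ∩ d.support).card = 0 := by omega
    rw [Finset.card_eq_zero] at h0
    exact Finset.disjoint_iff_inter_eq_empty.mpr h0
  -- T-sum identity
  have hTsum : ∀ (x : Perm (Fin m)), x.IsSwap → ∀ ε : Bool,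
      (∑ g ∈ univ.filter (fun g : Perm (Fin m) => g.IsSwap ∧ ¬ Commute g x), ρ ε g)
        + (2 : ℚ) • ρ ε x
      = ∑ g ∈ univ.filter (fun g : Perm (Fin m) => g.IsSwap),
          ((g.support ∩ x.support).card : ℚ) • ρ ε g := by
    intro x hx ε
    have h1 : (∑ g ∈ univ.filter (fun g : Perm (Fin m) => g.IsSwap ∧ ¬ Commute g x), ρ ε g)
        = ∑ g ∈ univ.filter (fun g : Perm (Fin m) => g.IsSwap),
            (if ¬ Commute g x then ρ ε g else 0) := by
      rw [← Finset.sum_filter, Finset.filter_filter]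
    have h2 : (2 : ℚ) • ρ ε x
        = ∑ g ∈ univ.filter (fun g : Perm (Fin m) => g.IsSwap),
            (if g = x then (2 : ℚ) • ρ ε g else 0) := by
      rw [Finset.sum_ite_eq' _ x (fun g => (2 : ℚ) • ρ ε g)]
      rw [if_pos (by simp [Finset.mem_filter, hx])]
    rw [h1, h2, ← Finset.sum_add_distrib]
    refine Finset.sum_congr rfl fun g hg => ?_
    rw [Finset.mem_filter] at hg
    rw [← aux_coef hg.2 hx, add_smul, ite_smul, ite_smul, one_smul, zero_smul]
  have hpair1 : ∀ ε : Bool,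
      ((∑ g ∈ univ.filter (fun g : Perm (Fin m) => g.IsSwap ∧ ¬ Commute g a), ρ ε g)
          + (2 : ℚ) • ρ ε a)
        + ((∑ g ∈ univ.filter (fun g : Perm (Fin m) => g.IsSwap ∧ ¬ Commute g b), ρ ε g)
          + (2 : ℚ) • ρ ε b)
      = ∑ g ∈ univ.filter (fun g : Perm (Fin m) => g.IsSwap),
          (((g.support ∩ (a.support ∪ b.support)).card : ℚ)) • ρ ε g := by
    intro ε
    rw [hTsum a ha ε, hTsum b hb ε, ← Finset.sum_add_distrib]
    refine Finset.sum_congr rfl fun g hg => ?_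
    rw [← add_smul]
    congr 1
    rw [Finset.inter_union_distrib_left,
      Finset.card_union_of_disjoint (hdab.mono Finset.inter_subset_right Finset.inter_subset_right)]
    push_cast
    ring
  have hpair2 : ∀ ε : Bool,
      ((∑ g ∈ univ.filter (fun g : Perm (Fin m) => g.IsSwap ∧ ¬ Commute g c), ρ ε g)
          + (2 : ℚ) • ρ ε c)
        + ((∑ g ∈ univ.filter (fun g : Perm (Fin m) => g.IsSwap ∧ ¬ Commute g d), ρ ε g)
          + (2 : ℚ) • ρ ε d)
      = ∑ g ∈ univ.filter (fun g : Perm (Fin m) => g.IsSwap),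
          (((g.support ∩ (a.support ∪ b.support)).card : ℚ)) • ρ ε g := by
    intro ε
    rw [hsupp]
    rw [hTsum c hc ε, hTsum d hd ε, ← Finset.sum_add_distrib]
    refine Finset.sum_congr rfl fun g hg => ?_
    rw [← add_smul]
    congr 1
    rw [Finset.inter_union_distrib_left,
      Finset.card_union_of_disjoint (hdcd.mono Finset.inter_subset_right Finset.inter_subset_right)]
    push_cast
    ring
  have hTdiff : ∀ ε : Bool,
      ((∑ g ∈ univ.filter (fun g : Perm (Fin m) => g.IsSwap ∧ ¬ Commute g a), ρ ε g)
        + (∑ g ∈ univ.filter (fun g : Perm (Fin m) => g.IsSwap ∧ ¬ Commute g b), ρ ε g))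
      - ((∑ g ∈ univ.filter (fun g : Perm (Fin m) => g.IsSwap ∧ ¬ Commute g c), ρ ε g)
        + (∑ g ∈ univ.filter (fun g : Perm (Fin m) => g.IsSwap ∧ ¬ Commute g d), ρ ε g))
      = (2 : ℚ) • ρ ε c + (2 : ℚ) • ρ ε d - (2 : ℚ) • ρ ε a - (2 : ℚ) • ρ ε b := by
    intro ε
    linear_combination (norm := module) hpair1 ε - hpair2 ε
  -- the action of the sum on each basis vector
  have hE : ∀ (x : Perm (Fin m)), x.IsSwap → ∀ ε : Bool,
      (∑ g ∈ univ.filter (fun g : Perm (Fin m) => g.IsSwap), ρ true g) * ρ ε x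
      = (if ε = true then ρ true x else 0)
        + (α * ((m : ℚ) - 2)) • ρ ε x
        + (α / 2) •
          ((∑ g ∈ univ.filter (fun g : Perm (Fin m) => g.IsSwap ∧ ¬ Commute g x), ρ true g)
            - ∑ g ∈ univ.filter (fun g : Perm (Fin m) => g.IsSwap ∧ ¬ Commute g x), ρ ε g) := by
    intro x hx ε
    rw [Finset.sum_mul]
    exact aux_key_sum hm2 α ρ hmul_self hmul_comm hmul_ncomm x hx ε
  have hX : (∑ g ∈ univ.filter (fun g : Perm (Fin m) => g.IsSwap), ρ true g) * v
      = (α * (1 + α * ((m : ℚ) - 2))) • (ρ true a + ρ true b - ρ true c - ρ true d)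
        + ((1 - α) * (α * ((m : ℚ) - 2))) • (ρ false a + ρ false b - ρ false c - ρ false d)
        + ((1 - α) * α) • ((ρ true c + ρ true d - ρ true a - ρ true b)
            - (ρ false c + ρ false d - ρ false a - ρ false b)) := by
    rw [hv]
    simp only [mul_add, mul_sub, mul_smul_comm]
    rw [hE a ha true, hE b hb true, hE c hc true, hE d hd true,
      hE a ha false, hE b hb false, hE c hc false, hE d hd false]
    simp only [reduceIte, Bool.false_eq_true, if_false]
    linear_combination (norm := module)
      ((1 - α) * (α / 2)) • hTdiff true - ((1 - α) * (α / 2)) • hTdiff false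
  calc idA * v
      = (1 + α * ((m : ℚ) - 2))⁻¹ •
        ((∑ g ∈ univ.filter (fun g : Perm (Fin m) => g.IsSwap), ρ true g) * v) := by
        rw [hidA, smul_mul_assoc]
    _ = (α * ((m : ℚ) - 1) / (1 + α * ((m : ℚ) - 2))) • v := by
        rw [hX, hv]
        match_scalars <;> field_simp <;> ring
end
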